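/- arXiv:2504.00801 — 3 statements merged into one kernel-verified Lean document; each statement's English description precedes it below -/
import Mathlib

section
/- Let $a<b$, let $h:[a,b]\to\mathbb{R}$ be three times continuously differentiable, attaining its maximum over $[a,b]$ only at the endpoint $c=a$, with $h'(a)=0$ and $h''(a)\neq 0$. Let $k$ be an odd positive integer and let $g:[a,b]\to\mathbb{R}$ be $(k+1)$-times continuously differentiable with $g(a)=g'(a)=\cdots=g^{(k-1)}(a)=0$ and $g^{(k)}(a)\neq 0$. Then, as $t\to\infty$, $\int_a^b e^{t h(x)} g(x)\,dx = e^{t h(a)}\Big( t^{-1/2-k/2}\, g^{(k)}(a)\, \sqrt{\tfrac{2^{k-1}}{|h''(a)|^{k+1}}}\, \tfrac{1}{k!}\big(\tfrac{k-1}{2}\big)! + O(t^{-1-k/2})\Big)$. -/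
open Real MeasureTheory Set

open Filter

section helpers_laplace


lemma abs_exp_sub_one_le' (x : ℝ) : |Real.exp x - 1| ≤ |x| * Real.exp |x| := by
  rcases le_or_gt 0 x with hx | hx
  · rw [abs_of_nonneg hx, abs_of_nonneg (by linarith [Real.one_le_exp hx] : (0:ℝ) ≤ Real.exp x - 1)]
    have h1 : (1 - x) * Real.exp x ≤ 1 := by
      have h2 := Real.add_one_le_exp (-x)
      have h3 : (-x + 1) * Real.exp x ≤ Real.exp (-x) * Real.exp x :=
        mul_le_mul_of_nonneg_right h2 (Real.exp_pos x).le
      rwa [← Real.exp_add, neg_add_cancel, Real.exp_zero, show (-x+1) = 1-x by ring] at h3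
    nlinarith
  · rw [abs_of_neg hx, abs_of_nonpos (by nlinarith [Real.exp_lt_one_iff.mpr hx] : Real.exp x - 1 ≤ 0)]
    have h2 := Real.add_one_le_exp x
    have h3 : (1:ℝ) ≤ Real.exp (-x) := Real.one_le_exp (by linarith)
    nlinarith

lemma ev_exp_le {θ : ℝ} (hθ : 0 < θ) (K e : ℝ) :
    ∀ᶠ t in atTop, K * Real.exp (-(θ * t)) ≤ t ^ e := by
  obtain ⟨n, hn⟩ := exists_nat_ge (-e)
  have h0 : Tendsto (fun t : ℝ => θ * t) atTop atTop :=
    Tendsto.const_mul_atTop hθ tendsto_id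
  have h1 : Tendsto (fun t : ℝ => K / θ ^ n * ((θ * t) ^ n * Real.exp (-(θ * t)))) atTop (nhds 0) := by
    have := (Real.tendsto_pow_mul_exp_neg_atTop_nhds_zero n).comp h0
    simpa using this.const_mul (K / θ ^ n)
  have h2 : ∀ᶠ t in atTop, K / θ ^ n * ((θ * t) ^ n * Real.exp (-(θ * t))) ≤ 1 := by
    filter_upwards [h1.eventually (eventually_le_nhds (by norm_num : (0:ℝ) < 1))] with t ht
    exact ht
  filter_upwards [h2, eventually_ge_atTop (1:ℝ)] with t h2t h1t
  have htpos : (0:ℝ) < t := by linarith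
  have key : K * Real.exp (-(θ * t)) * t ^ n ≤ 1 := by
    have heq : K / θ ^ n * ((θ * t) ^ n * Real.exp (-(θ * t))) =
        K * Real.exp (-(θ * t)) * t ^ n := by
      field_simp [mul_pow]
      ring
    linarith [heq ▸ h2t]
  have h4 : K * Real.exp (-(θ * t)) ≤ (t ^ n)⁻¹ := by
    rw [inv_eq_one_div, le_div_iff₀ (pow_pos htpos n)]
    exact key
  have h5 : (t ^ n : ℝ)⁻¹ ≤ t ^ e := by
    have : t ^ (-(n:ℝ)) ≤ t ^ e := Real.rpow_le_rpow_of_exponent_le h1t (by linarith)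
    rwa [Real.rpow_neg htpos.le, Real.rpow_natCast] at this
  linarith

lemma gauss_moment (m : ℕ) {s : ℝ} (hs : 0 < s) :
    ∫ u in Ioi (0:ℝ), u ^ m * Real.exp (-(s * u ^ 2)) =
      s ^ (-((m:ℝ) + 1) / 2) * (1 / 2) * Real.Gamma (((m:ℝ) + 1) / 2) := by
  have h := integral_rpow_mul_exp_neg_mul_rpow (p := 2) (q := (m:ℝ)) (b := s)
    two_pos (lt_of_lt_of_le (by norm_num) (Nat.cast_nonneg m)) hs
  rw [← h]
  refine setIntegral_congr_fun measurableSet_Ioi (fun x hx => ?_)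
  rw [← Real.rpow_natCast x m, ← Real.rpow_natCast x 2]
  norm_num [neg_mul]

lemma gauss_integrable (m : ℕ) {s : ℝ} (hs : 0 < s) :
    IntegrableOn (fun u : ℝ => u ^ m * Real.exp (-(s * u ^ 2))) (Ioi 0) := by
  have h := integrableOn_rpow_mul_exp_neg_mul_sq hs (s := (m:ℝ))
    (lt_of_lt_of_le (by norm_num) (Nat.cast_nonneg m))
  refine h.congr_fun (fun x hx => ?_) measurableSet_Ioi
  rw [← Real.rpow_natCast x m]
  norm_num [neg_mul]

lemma aux_far_mul {t X η : ℝ} (ht : 0 < t) (h1 : X ≤ -η) : t * X ≤ -(η * t) := by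
  calc t * X ≤ t * (-η) := mul_le_mul_of_nonneg_left h1 ht.le
    _ = -(η * t) := by ring

lemma aux_far_total {c δ Mg E : ℝ} (hδ : 0 < δ) (hMg : 0 ≤ Mg) (hE : 0 < E) :
    (c - δ) * (Mg * E) ≤ c * Mg * E := by
  nlinarith [mul_nonneg (mul_nonneg hδ.le hMg) hE.le]

lemma aux_harg {t l δ u : ℝ} (hl : 0 < l) (ht : 1 ≤ t) (h2 : δ ^ 2 ≤ u ^ 2) :
    -(t * l * u ^ 2) ≤ -(l * δ ^ 2 / 2 * t) + -(l / 2 * u ^ 2) := by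
  nlinarith [mul_le_mul_of_nonneg_left h2 (by nlinarith : (0:ℝ) ≤ t * l / 2),
    mul_nonneg (by linarith : (0:ℝ) ≤ t - 1) (mul_nonneg hl.le (sq_nonneg u))]

end helpers_laplace

set_option maxHeartbeats 2000000 in
/-- Laplace's method, maximum at the left endpoint `a` with `h'(a) = 0`, `k` odd:
`∫ e^{th} g = e^{th(a)} (t^{-1/2-k/2} g^(k)(a) √(2^(k-1)/|h''(a)|^(k+1)) ((k-1)/2)!/k! + O(t^{-1-k/2}))`. -/
theorem laplace_left_endpoint_critical_odd
    (a b : ℝ) (hab : a < b)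
    (h g : ℝ → ℝ) (k : ℕ) (hk : Odd k) (hkpos : 0 < k)
    (hh : ContDiffOn ℝ 3 h (Set.Icc a b))
    (hmax : ∀ x ∈ Set.Icc a b, x ≠ a → h x < h a)
    (hh1 : derivWithin h (Set.Icc a b) a = 0)
    (hh2 : iteratedDerivWithin 2 h (Set.Icc a b) a ≠ 0)
    (hg : ContDiffOn ℝ (k + 1) g (Set.Icc a b))
    (hgvanish : ∀ i < k, iteratedDerivWithin i g (Set.Icc a b) a = 0)
    (hgk : iteratedDerivWithin k g (Set.Icc a b) a ≠ 0) :
    ∃ C > 0, ∃ T > 0, ∀ t > T,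
      |(∫ x in a..b, Real.exp (t * h x) * g x) -
        Real.exp (t * h a) * t ^ (-(1 : ℝ) / 2 - (k : ℝ) / 2) *
          iteratedDerivWithin k g (Set.Icc a b) a *
          Real.sqrt ((2 : ℝ) ^ (k - 1) / |iteratedDerivWithin 2 h (Set.Icc a b) a| ^ (k + 1)) *
          ((Nat.factorial ((k - 1) / 2) : ℝ) / (Nat.factorial k : ℝ))| ≤
        C * Real.exp (t * h a) * t ^ (-(1 : ℝ) - (k : ℝ) / 2) := by
  obtain ⟨m, hm⟩ := hk
  have hmk : (k - 1) / 2 = m := by omega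
  set A := iteratedDerivWithin 2 h (Set.Icc a b) a with hAdef
  set G := iteratedDerivWithin k g (Set.Icc a b) a with hGdef
  -- Taylor for h
  have hh3 : ContDiffOn ℝ ((2:ℕ) + 1) h (Set.Icc a b) := by exact_mod_cast hh
  obtain ⟨Ch₀, hCh₀⟩ := exists_taylor_mean_remainder_bound hab.le hh3
  set Ch := max Ch₀ 0 with hChdef
  have hCh0 : 0 ≤ Ch := le_max_right _ _
  have htayh : ∀ x : ℝ, taylorWithinEval h 2 (Set.Icc a b) a x = h a + A / 2 * (x - a) ^ 2 := by
    intro x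
    rw [taylor_within_apply]
    rw [Finset.sum_range_succ, Finset.sum_range_succ, Finset.sum_range_one]
    rw [iteratedDerivWithin_one, hh1]
    simp [iteratedDerivWithin_zero, smul_eq_mul]
    norm_num
    ring
  have hCh : ∀ x ∈ Icc a b, |h x - h a - A / 2 * (x - a) ^ 2| ≤ Ch * (x - a) ^ 3 := by
    intro x hx
    have h1 := hCh₀ x hx
    rw [htayh x] at h1
    have h2 : (0:ℝ) ≤ (x - a) ^ 3 := by
      have : 0 ≤ x - a := by linarith [hx.1]
      positivity
    calc |h x - h a - A / 2 * (x - a) ^ 2| = ‖h x - (h a + A / 2 * (x - a) ^ 2)‖ := by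
          rw [Real.norm_eq_abs]; ring_nf
      _ ≤ Ch₀ * (x - a) ^ 3 := h1
      _ ≤ Ch * (x - a) ^ 3 := by
          apply mul_le_mul_of_nonneg_right (le_max_left _ _) h2
  -- Taylor for g
  have hgk1 : ContDiffOn ℝ ((k:ℕ) + 1) g (Set.Icc a b) := by exact_mod_cast hg
  obtain ⟨Cg₀, hCg₀⟩ := exists_taylor_mean_remainder_bound hab.le hgk1
  set Cg := max Cg₀ 0 with hCgdef
  have hCg0 : 0 ≤ Cg := le_max_right _ _
  have htayg : ∀ x : ℝ, taylorWithinEval g k (Set.Icc a b) a x = G / (Nat.factorial k) * (x - a) ^ k := by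
    intro x
    rw [taylor_within_apply, Finset.sum_range_succ]
    rw [Finset.sum_eq_zero (fun i hi => by
      rw [hgvanish i (Finset.mem_range.mp hi), smul_zero])]
    simp [smul_eq_mul]
    ring
  have hCg : ∀ x ∈ Icc a b, |g x - G / (Nat.factorial k) * (x - a) ^ k| ≤ Cg * (x - a) ^ (k + 1) := by
    intro x hx
    have h1 := hCg₀ x hx
    rw [htayg x] at h1
    have h2 : (0:ℝ) ≤ (x - a) ^ (k+1) := by
      have : 0 ≤ x - a := by linarith [hx.1]
      positivity
    calc |g x - G / (Nat.factorial k) * (x - a) ^ k| = ‖g x - G / (Nat.factorial k) * (x - a) ^ k‖ := rfl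
      _ ≤ Cg₀ * (x - a) ^ (k+1) := h1
      _ ≤ Cg * (x - a) ^ (k+1) := mul_le_mul_of_nonneg_right (le_max_left _ _) h2
  -- A < 0
  have hAneg : A < 0 := by
    by_contra hA0
    push_neg at hA0
    have hApos : 0 < A := lt_of_le_of_ne hA0 (Ne.symm hh2)
    set u := min (b - a) (A / (2 * (Ch + 1))) with hu
    have hu0 : 0 < u := lt_min (by linarith) (by positivity)
    have hub : u ≤ b - a := min_le_left _ _
    have hua : u ≤ A / (2 * (Ch + 1)) := min_le_right _ _
    have hx : a + u ∈ Icc a b := ⟨by linarith, by linarith⟩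
    have h1 := hCh (a + u) hx
    have h2 := hmax (a + u) hx (by intro hc; nlinarith [hc])
    rw [abs_le] at h1
    have h3 : a + u - a = u := by ring
    rw [h3] at h1
    have step1 : A / 2 * u ^ 2 < Ch * u ^ 3 := by linarith [h1.1]
    have step2 : A / 2 < Ch * u := by
      have h4 : (A / 2) * u ^ 2 < (Ch * u) * u ^ 2 := by nlinarith [step1]
      exact lt_of_mul_lt_mul_right h4 (sq_nonneg u)
    have step3 : Ch * u ≤ Ch * (A / (2 * (Ch + 1))) := mul_le_mul_of_nonneg_left hua hCh0
    have hv : 0 < A / (2 * (Ch + 1)) := by positivity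
    nlinarith [step2.trans_le step3, div_mul_cancel₀ A (show (2 * (Ch + 1)) ≠ 0 by positivity), hv, hCh0]
  -- setup of l, δ
  set l := -A / 2 with hldef
  have hl0 : 0 < l := by rw [hldef]; linarith
  have habsA : |A| = 2 * l := by rw [abs_of_neg hAneg]; rw [hldef]; ring
  set δ := min (b - a) (l / (2 * (Ch + 1))) with hδdef
  have hδ0 : 0 < δ := lt_min (by linarith) (by positivity)
  have hδc : δ ≤ b - a := min_le_left _ _
  have hChδ : Ch * δ ≤ l / 2 := by
    have h1 : δ ≤ l / (2 * (Ch + 1)) := min_le_right _ _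
    have h2 : Ch * δ ≤ Ch * (l / (2 * (Ch + 1))) := mul_le_mul_of_nonneg_left h1 hCh0
    have h3 : Ch * (l / (2 * (Ch + 1))) ≤ l / 2 := by
      rw [mul_div_assoc', div_le_div_iff₀ (by positivity) (by norm_num)]
      nlinarith
    linarith
  -- Taylor bounds in terms of u
  have hφ : ∀ u ∈ Icc (0:ℝ) (b - a), |h (a + u) - h a + l * u ^ 2| ≤ Ch * u ^ 3 := by
    intro u hu
    have h1 := hCh (a + u) ⟨by linarith [hu.1], by linarith [hu.2]⟩
    have h3 : a + u - a = u := by ring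
    rw [h3] at h1
    convert h1 using 2
    rw [hldef]; ring
  have hψ : ∀ u ∈ Icc (0:ℝ) (b - a), |g (a + u) - G / (Nat.factorial k) * u ^ k| ≤ Cg * u ^ (k + 1) := by
    intro u hu
    have h1 := hCg (a + u) ⟨by linarith [hu.1], by linarith [hu.2]⟩
    have h3 : a + u - a = u := by ring
    rw [h3] at h1
    exact h1
  -- far region
  have hne : (Icc (a + δ) b).Nonempty := nonempty_Icc.mpr (by linarith)
  have hconth : ContinuousOn h (Icc (a + δ) b) :=
    (hh.continuousOn).mono (Icc_subset_Icc (by linarith) le_rfl)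
  obtain ⟨x₀, hx₀mem, hx₀max⟩ := isCompact_Icc.exists_isMaxOn hne hconth
  set η := h a - h x₀ with hηdef
  have hη0 : 0 < η := by
    have hx₀ : x₀ ∈ Icc a b := ⟨by linarith [hx₀mem.1], hx₀mem.2⟩
    have := hmax x₀ hx₀ (by intro hc; rw [hc] at hx₀mem; linarith [hx₀mem.1])
    rw [hηdef]; linarith
  have hfar : ∀ x ∈ Icc (a + δ) b, h x - h a ≤ -η := by
    intro x hx
    have h1 : h x ≤ h x₀ := hx₀max hx
    rw [hηdef]; linarith
  -- bound for g
  obtain ⟨Mg₀, hMg₀⟩ := isCompact_Icc.exists_bound_of_continuousOn hg.continuousOn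
  set Mg := max Mg₀ 0 with hMgdef
  have hMg0 : 0 ≤ Mg := le_max_right _ _
  have hMg : ∀ x ∈ Icc a b, |g x| ≤ Mg :=
    fun x hx => le_trans (hMg₀ x hx) (le_max_left _ _)
  -- constants
  set p : ℝ := -(1:ℝ) - (k:ℝ) / 2 with hpdef
  set c₁ := (l / 2) ^ (-((k:ℝ) + 2) / 2) * (1 / 2) * Real.Gamma (((k:ℝ) + 2) / 2) with hc₁def
  set c₂ := (l / 2) ^ (-((k:ℝ) + 4) / 2) * (1 / 2) * Real.Gamma (((k:ℝ) + 4) / 2) with hc₂def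
  have hc₁0 : 0 < c₁ := by
    rw [hc₁def]; positivity
  have hc₂0 : 0 < c₂ := by
    rw [hc₂def]; positivity
  set Kq := ∫ u in Ioi (0:ℝ), u ^ k * Real.exp (-(l / 2 * u ^ 2)) with hKqdef
  have hKq0 : 0 ≤ Kq := setIntegral_nonneg measurableSet_Ioi (fun x hx => by have hx' : (0:ℝ) < x := hx; positivity)
  set Cf := Ch * (|G| / (Nat.factorial k)) with hCfdef
  have hCf0 : 0 ≤ Cf := by rw [hCfdef]; positivity
  refine ⟨Cg * c₁ + Cf * c₂ + 2, by positivity, ?_⟩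
  have hev1 := ev_exp_le (show (0:ℝ) < l * δ ^ 2 / 2 by positivity) ((|G| / (Nat.factorial k)) * Kq) p
  have hev2 := ev_exp_le hη0 ((b - a) * Mg) p
  obtain ⟨T₀, hT₀⟩ := eventually_atTop.mp (hev1.and (hev2.and (eventually_ge_atTop (1:ℝ))))
  refine ⟨max T₀ 1, by positivity, fun t ht => ?_⟩
  have h1t : (1:ℝ) ≤ t := le_of_lt (lt_of_le_of_lt (le_max_right _ _) ht)
  have htpos : (0:ℝ) < t := by linarith
  obtain ⟨hB1, hB2, -⟩ := hT₀ t (le_of_lt (lt_of_le_of_lt (le_max_left _ _) ht))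
  -- change of variables
  set φF : ℝ → ℝ := fun u => Real.exp (t * (h (a + u) - h a)) * g (a + u) with hφFdef
  have key1 : Real.exp (t * h a) * (∫ u in (0:ℝ)..(b - a), φF u)
      = ∫ x in a..b, Real.exp (t * h x) * g x := by
    rw [← intervalIntegral.integral_const_mul]
    have h2 : (∫ u in (0:ℝ)..(b - a), Real.exp (t * h a) * φF u)
        = ∫ u in (0:ℝ)..(b - a), (fun x => Real.exp (t * h x) * g x) (a + u) := by
      apply intervalIntegral.integral_congr
      intro u _
      simp only [hφFdef]
      rw [← mul_assoc, ← Real.exp_add,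
        show t * h a + t * (h (a + u) - h a) = t * h (a + u) by ring]
    rw [h2, intervalIntegral.integral_comp_add_left (fun x => Real.exp (t * h x) * g x) a]
    norm_num
  -- main term identity
  have hsq : Real.sqrt ((2:ℝ) ^ (k - 1) / |A| ^ (k + 1)) = l ^ (-((k:ℝ) + 1) / 2) / 2 := by
    have e1 : (l ^ (-((k:ℝ) + 1) / 2)) ^ 2 = ((l : ℝ) ^ (k + 1))⁻¹ := by
      rw [sq, ← Real.rpow_add hl0, ← Real.rpow_natCast l (k + 1), ← Real.rpow_neg hl0.le]
      congr 1
      push_cast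
      ring
    have harg : (2:ℝ) ^ (k - 1) / |A| ^ (k + 1) = (l ^ (-((k:ℝ) + 1) / 2) / 2) ^ 2 := by
      rw [habsA, div_pow, mul_pow, e1]
      have e2 : (2:ℝ) ^ (k + 1) = 2 ^ (k - 1) * 4 := by
        rw [show k + 1 = (k - 1) + 2 by omega, pow_add]
        norm_num
      have hlk : (0:ℝ) < l ^ (k + 1) := by positivity
      rw [e2]
      field_simp
      ring
    rw [harg, Real.sqrt_sq (by positivity)]
  set q : ℝ → ℝ := fun u => u ^ k * Real.exp (-(t * l * u ^ 2)) with hqdef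
  have key2 : Real.exp (t * h a) * t ^ (-(1:ℝ) / 2 - (k:ℝ) / 2) * G *
        Real.sqrt ((2:ℝ) ^ (k - 1) / |A| ^ (k + 1)) *
        ((Nat.factorial ((k - 1) / 2) : ℝ) / (Nat.factorial k : ℝ))
      = Real.exp (t * h a) *
          (G / (Nat.factorial k : ℝ) * ∫ u in Ioi (0:ℝ), q u) := by
    simp only [hqdef]
    rw [gauss_moment k (by positivity : (0:ℝ) < t * l), hsq, hmk]
    have hΓ : Real.Gamma (((k:ℝ) + 1) / 2) = (Nat.factorial m : ℝ) := by
      rw [show ((k:ℝ) + 1) / 2 = (m : ℝ) + 1 by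
        rw [hm]; push_cast; ring]
      exact_mod_cast Real.Gamma_nat_eq_factorial m
    rw [hΓ, Real.mul_rpow htpos.le hl0.le,
      show -(1:ℝ) / 2 - (k:ℝ) / 2 = -((k:ℝ) + 1) / 2 by ring]
    ring
  rw [← key1, key2, ← mul_sub, abs_mul, abs_of_nonneg (Real.exp_pos _).le,
    show (Cg * c₁ + Cf * c₂ + 2) * Real.exp (t * h a) * t ^ p
      = Real.exp (t * h a) * ((Cg * c₁ + Cf * c₂ + 2) * t ^ p) by ring]
  apply mul_le_mul_of_nonneg_left ?_ (Real.exp_pos _).le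
  -- now: |∫ u in 0..(b-a), φF u - G/k! * ∫ q| ≤ (Cg*c₁+Cf*c₂+2) * t^p
  set B : ℝ → ℝ := fun u => Cg * (u ^ (k + 1) * Real.exp (-(t * (l / 2) * u ^ 2)))
      + (t * Cf) * (u ^ (k + 3) * Real.exp (-(t * (l / 2) * u ^ 2))) with hBdef
  have hmemIcc : ∀ u ∈ Icc (0:ℝ) (b - a), a + u ∈ Icc a b :=
    fun u hu => ⟨by linarith [hu.1], by linarith [hu.2]⟩
  have haddcont : ContinuousOn (fun u : ℝ => a + u) (Icc 0 (b - a)) :=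
    (continuous_const.add continuous_id).continuousOn
  have hcontφ : ContinuousOn φF (Icc 0 (b - a)) := by
    apply ContinuousOn.mul
    · apply Real.continuous_exp.comp_continuousOn
      exact continuousOn_const.mul ((hh.continuousOn.comp haddcont hmemIcc).sub continuousOn_const)
    · exact hg.continuousOn.comp haddcont hmemIcc
  have hintφ : IntegrableOn φF (Icc 0 (b - a)) := hcontφ.integrableOn_Icc
  have him1 : Ioc (0:ℝ) δ ⊆ Icc 0 (b - a) := fun x hx => ⟨hx.1.le, le_trans hx.2 hδc⟩
  have him2 : Ioc δ (b - a) ⊆ Icc 0 (b - a) := fun x hx => ⟨le_trans hδ0.le hx.1.le, hx.2⟩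
  have hintq : IntegrableOn q (Ioi 0) := gauss_integrable k (by positivity)
  have hintB : IntegrableOn B (Ioi 0) := by
    apply Integrable.add
    · exact (gauss_integrable (k + 1) (by positivity : (0:ℝ) < t * (l / 2))).const_mul Cg
    · exact (gauss_integrable (k + 3) (by positivity : (0:ℝ) < t * (l / 2))).const_mul (t * Cf)
  have hXsplit : (∫ u in (0:ℝ)..(b - a), φF u)
      = (∫ u in Ioc (0:ℝ) δ, φF u) + ∫ u in Ioc δ (b - a), φF u := by
    rw [intervalIntegral.integral_of_le (by linarith : (0:ℝ) ≤ b - a),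
      ← Ioc_union_Ioc_eq_Ioc hδ0.le hδc,
      setIntegral_union (Ioc_disjoint_Ioc_of_le le_rfl) measurableSet_Ioc
        (hintφ.mono_set him1) (hintφ.mono_set him2)]
  have hYsplit : (∫ u in Ioi (0:ℝ), q u) = (∫ u in Ioc (0:ℝ) δ, q u) + ∫ u in Ioi δ, q u := by
    rw [← Ioc_union_Ioi_eq_Ioi hδ0.le,
      setIntegral_union (Ioc_disjoint_Ioi le_rfl) measurableSet_Ioi
        (hintq.mono_set Ioc_subset_Ioi_self) (hintq.mono_set (Ioi_subset_Ioi hδ0.le))]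
  rw [hXsplit, hYsplit,
    show (∫ u in Ioc (0:ℝ) δ, φF u) + (∫ u in Ioc δ (b - a), φF u)
        - G / (Nat.factorial k : ℝ) * ((∫ u in Ioc (0:ℝ) δ, q u) + ∫ u in Ioi δ, q u)
      = ((∫ u in Ioc (0:ℝ) δ, φF u) - G / (Nat.factorial k : ℝ) * ∫ u in Ioc (0:ℝ) δ, q u)
        + (∫ u in Ioc δ (b - a), φF u)
        + (-(G / (Nat.factorial k : ℝ)) * ∫ u in Ioi δ, q u) by ring]
  refine le_trans (abs_add_three _ _ _) ?_
  -- Bound 1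
  have hbound1 : |(∫ u in Ioc (0:ℝ) δ, φF u) - G / (Nat.factorial k : ℝ) * ∫ u in Ioc (0:ℝ) δ, q u|
      ≤ (Cg * c₁ + Cf * c₂) * t ^ p := by
    have hint_q_Ioc : IntegrableOn q (Ioc (0:ℝ) δ) := hintq.mono_set Ioc_subset_Ioi_self
    have hint_φ_Ioc : IntegrableOn φF (Ioc (0:ℝ) δ) := hintφ.mono_set him1
    have hee0 : (0:ℝ) < t * (l / 2) := by positivity
    -- pointwise bound
    have hpoint : ∀ u ∈ Ioc (0:ℝ) δ, |φF u - G / (Nat.factorial k : ℝ) * q u| ≤ B u := by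
      intro u hu
      have hu0 : (0:ℝ) < u := hu.1
      have huI : u ∈ Icc (0:ℝ) (b - a) := ⟨hu0.le, le_trans hu.2 hδc⟩
      have hρb : |t * (h (a + u) - h a) + t * l * u ^ 2| ≤ t * Ch * u ^ 3 := by
        have h1 := hφ u huI
        calc |t * (h (a + u) - h a) + t * l * u ^ 2|
            = t * |h (a + u) - h a + l * u ^ 2| := by
              rw [show t * (h (a + u) - h a) + t * l * u ^ 2
                  = t * (h (a + u) - h a + l * u ^ 2) by ring, abs_mul, abs_of_pos htpos]
          _ ≤ t * (Ch * u ^ 3) := mul_le_mul_of_nonneg_left h1 htpos.le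
          _ = t * Ch * u ^ 3 := by ring
      have hρb2 : t * Ch * u ^ 3 ≤ t * (l / 2) * u ^ 2 := by
        have h1 : Ch * u ≤ l / 2 :=
          le_trans (mul_le_mul_of_nonneg_left hu.2 hCh0) hChδ
        calc t * Ch * u ^ 3 = (Ch * u) * (t * u ^ 2) := by ring
          _ ≤ (l / 2) * (t * u ^ 2) := mul_le_mul_of_nonneg_right h1 (by positivity)
          _ = t * (l / 2) * u ^ 2 := by ring
      have hρabs : |t * (h (a + u) - h a) + t * l * u ^ 2| ≤ t * (l / 2) * u ^ 2 :=
        le_trans hρb hρb2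
      have hFdec : φF u = Real.exp (-(t * l * u ^ 2)) *
          (Real.exp (t * (h (a + u) - h a) + t * l * u ^ 2) * g (a + u)) := by
        simp only [hφFdef]
        rw [← mul_assoc, ← Real.exp_add,
          show -(t * l * u ^ 2) + (t * (h (a + u) - h a) + t * l * u ^ 2)
            = t * (h (a + u) - h a) by ring]
      have hqdec2 : G / (Nat.factorial k : ℝ) * q u
          = Real.exp (-(t * l * u ^ 2)) * (G / (Nat.factorial k : ℝ) * u ^ k) := by
        simp only [hqdef]; ring
      set ρ := t * (h (a + u) - h a) + t * l * u ^ 2 with hρdef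
      rw [hFdec, hqdec2, ← mul_sub, abs_mul, Real.abs_exp]
      have hexpρ : Real.exp ρ ≤ Real.exp (t * (l / 2) * u ^ 2) :=
        Real.exp_le_exp.mpr (le_trans (le_abs_self ρ) hρabs)
      have hexpρ1 : |Real.exp ρ - 1| ≤ (t * Ch * u ^ 3) * Real.exp (t * (l / 2) * u ^ 2) := by
        refine le_trans (abs_exp_sub_one_le' ρ)
          (mul_le_mul hρb (Real.exp_le_exp.mpr hρabs) (Real.exp_pos _).le ?_)
        positivity
      have hg1 : |g (a + u) - G / (Nat.factorial k : ℝ) * u ^ k| ≤ Cg * u ^ (k + 1) := hψ u huI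
      have hcore : |Real.exp ρ * g (a + u) - G / (Nat.factorial k : ℝ) * u ^ k|
          ≤ Real.exp (t * (l / 2) * u ^ 2) * (Cg * u ^ (k + 1))
            + (t * Ch * u ^ 3 * Real.exp (t * (l / 2) * u ^ 2)) * (|G| / (Nat.factorial k : ℝ) * u ^ k) := by
        calc |Real.exp ρ * g (a + u) - G / (Nat.factorial k : ℝ) * u ^ k|
            = |Real.exp ρ * (g (a + u) - G / (Nat.factorial k : ℝ) * u ^ k)
                + (Real.exp ρ - 1) * (G / (Nat.factorial k : ℝ) * u ^ k)| := by
              rw [show Real.exp ρ * g (a + u) - G / (Nat.factorial k : ℝ) * u ^ k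
                  = Real.exp ρ * (g (a + u) - G / (Nat.factorial k : ℝ) * u ^ k)
                    + (Real.exp ρ - 1) * (G / (Nat.factorial k : ℝ) * u ^ k) by ring]
          _ ≤ |Real.exp ρ * (g (a + u) - G / (Nat.factorial k : ℝ) * u ^ k)|
              + |(Real.exp ρ - 1) * (G / (Nat.factorial k : ℝ) * u ^ k)| := abs_add_le _ _
          _ = Real.exp ρ * |g (a + u) - G / (Nat.factorial k : ℝ) * u ^ k|
              + |Real.exp ρ - 1| * (|G| / (Nat.factorial k : ℝ) * u ^ k) := by
              rw [abs_mul, Real.abs_exp, abs_mul, abs_mul, abs_div, Nat.abs_cast,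
                abs_of_nonneg (pow_nonneg hu0.le k)]
          _ ≤ Real.exp (t * (l / 2) * u ^ 2) * (Cg * u ^ (k + 1))
              + (t * Ch * u ^ 3 * Real.exp (t * (l / 2) * u ^ 2)) * (|G| / (Nat.factorial k : ℝ) * u ^ k) := by
              refine add_le_add (mul_le_mul hexpρ hg1 (abs_nonneg _) (Real.exp_pos _).le) ?_
              exact mul_le_mul_of_nonneg_right hexpρ1 (by positivity)
      have hee : Real.exp (-(t * l * u ^ 2)) * Real.exp (t * (l / 2) * u ^ 2)
          = Real.exp (-(t * (l / 2) * u ^ 2)) := by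
        rw [← Real.exp_add]; congr 1; ring
      calc Real.exp (-(t * l * u ^ 2)) * |Real.exp ρ * g (a + u) - G / (Nat.factorial k : ℝ) * u ^ k|
          ≤ Real.exp (-(t * l * u ^ 2)) *
              (Real.exp (t * (l / 2) * u ^ 2) * (Cg * u ^ (k + 1))
                + (t * Ch * u ^ 3 * Real.exp (t * (l / 2) * u ^ 2)) * (|G| / (Nat.factorial k : ℝ) * u ^ k)) :=
            mul_le_mul_of_nonneg_left hcore (Real.exp_pos _).le
        _ = (Real.exp (-(t * l * u ^ 2)) * Real.exp (t * (l / 2) * u ^ 2)) *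
              (Cg * u ^ (k + 1) + t * (Ch * (|G| / (Nat.factorial k : ℝ))) * (u ^ (k + 3))) := by
            ring
        _ = B u := by
            rw [hee]
            simp only [hBdef, hCfdef]
            ring
    -- combine
    have hcombine : (∫ u in Ioc (0:ℝ) δ, φF u) - G / (Nat.factorial k : ℝ) * ∫ u in Ioc (0:ℝ) δ, q u
        = ∫ u in Ioc (0:ℝ) δ, (φF u - G / (Nat.factorial k : ℝ) * q u) := by
      rw [integral_sub hint_φ_Ioc (hint_q_Ioc.const_mul _), integral_const_mul]
    have hI1' : (∫ u in Ioi (0:ℝ), u ^ (k + 1) * Real.exp (-(t * (l / 2) * u ^ 2)))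
        = t ^ (-((k:ℝ) + 2) / 2) * c₁ := by
      rw [hc₁def, gauss_moment (k + 1) hee0,
        show -(((k + 1 : ℕ):ℝ) + 1) / 2 = -((k:ℝ) + 2) / 2 by push_cast; ring,
        show (((k + 1 : ℕ):ℝ) + 1) / 2 = ((k:ℝ) + 2) / 2 by push_cast; ring,
        Real.mul_rpow htpos.le (by positivity : (0:ℝ) ≤ l / 2)]
      ring
    have hI2' : (∫ u in Ioi (0:ℝ), u ^ (k + 3) * Real.exp (-(t * (l / 2) * u ^ 2)))
        = t ^ (-((k:ℝ) + 4) / 2) * c₂ := by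
      rw [hc₂def, gauss_moment (k + 3) hee0,
        show -(((k + 3 : ℕ):ℝ) + 1) / 2 = -((k:ℝ) + 4) / 2 by push_cast; ring,
        show (((k + 3 : ℕ):ℝ) + 1) / 2 = ((k:ℝ) + 4) / 2 by push_cast; ring,
        Real.mul_rpow htpos.le (by positivity : (0:ℝ) ≤ l / 2)]
      ring
    have e1 : t ^ (-((k:ℝ) + 2) / 2) = t ^ p := by
      congr 1; rw [hpdef]; ring
    have e2 : t * t ^ (-((k:ℝ) + 4) / 2) = t ^ p := by
      nth_rewrite 1 [← Real.rpow_one t]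
      rw [← Real.rpow_add htpos]
      congr 1; rw [hpdef]; ring
    have hval : (∫ u in Ioi (0:ℝ), B u) = (Cg * c₁ + Cf * c₂) * t ^ p := by
      simp only [hBdef]
      rw [integral_add ((gauss_integrable (k + 1) hee0).const_mul Cg)
        ((gauss_integrable (k + 3) hee0).const_mul (t * Cf)),
        integral_const_mul, integral_const_mul, hI1', hI2', e1]
      linear_combination (Cf * c₂) * e2
    rw [hcombine]
    calc |∫ u in Ioc (0:ℝ) δ, (φF u - G / (Nat.factorial k : ℝ) * q u)|
        ≤ ∫ u in Ioc (0:ℝ) δ, |φF u - G / (Nat.factorial k : ℝ) * q u| := by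
          simpa [Real.norm_eq_abs] using
            norm_integral_le_integral_norm (μ := volume.restrict (Ioc (0:ℝ) δ))
              (fun u => φF u - G / (Nat.factorial k : ℝ) * q u)
      _ ≤ ∫ u in Ioc (0:ℝ) δ, B u :=
          setIntegral_mono_on (hint_φ_Ioc.sub (hint_q_Ioc.const_mul _)).abs
            (hintB.mono_set Ioc_subset_Ioi_self) measurableSet_Ioc hpoint
      _ ≤ ∫ u in Ioi (0:ℝ), B u := by
          refine setIntegral_mono_set hintB ?_ (HasSubset.Subset.eventuallyLE Ioc_subset_Ioi_self)
          refine (ae_restrict_iff' measurableSet_Ioi).mpr (Filter.Eventually.of_forall fun x hx => ?_)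
          have hx' : (0:ℝ) < x := hx
          simp only [hBdef]
          refine add_nonneg (mul_nonneg hCg0 (by positivity))
            (mul_nonneg (mul_nonneg htpos.le hCf0) (by positivity))
      _ = (Cg * c₁ + Cf * c₂) * t ^ p := hval
  -- Bound 2 (far region)
  have hbound2 : |∫ u in Ioc δ (b - a), φF u| ≤ t ^ p := by
    have hptfar : ∀ u ∈ Ioc δ (b - a), |φF u| ≤ Mg * Real.exp (-(η * t)) := by
      intro u hu
      have h1 : h (a + u) - h a ≤ -η := hfar _ ⟨by linarith [hu.1], by linarith [hu.2]⟩
      have h2 : t * (h (a + u) - h a) ≤ -(η * t) := aux_far_mul htpos h1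
      have h3 : |g (a + u)| ≤ Mg := hMg _ ⟨by linarith [hu.1, hδ0], by linarith [hu.2]⟩
      simp only [hφFdef]
      rw [abs_mul, Real.abs_exp]
      calc Real.exp (t * (h (a + u) - h a)) * |g (a + u)|
          ≤ Real.exp (-(η * t)) * Mg :=
            mul_le_mul (Real.exp_le_exp.mpr h2) h3 (abs_nonneg _) (Real.exp_pos _).le
        _ = Mg * Real.exp (-(η * t)) := by ring
    calc |∫ u in Ioc δ (b - a), φF u| ≤ ∫ u in Ioc δ (b - a), |φF u| := by
          simpa [Real.norm_eq_abs] using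
            norm_integral_le_integral_norm (μ := volume.restrict (Ioc δ (b - a))) φF
      _ ≤ ∫ _u in Ioc δ (b - a), Mg * Real.exp (-(η * t)) :=
          setIntegral_mono_on ((hintφ.mono_set him2).abs)
            (integrableOn_const measure_Ioc_lt_top.ne) measurableSet_Ioc hptfar
      _ = (b - a - δ) * (Mg * Real.exp (-(η * t))) := by
          rw [setIntegral_const, measureReal_def, Real.volume_Ioc, ENNReal.toReal_ofReal (by linarith)]
          simp [smul_eq_mul]
      _ ≤ (b - a) * Mg * Real.exp (-(η * t)) :=
          aux_far_total hδ0 hMg0 (Real.exp_pos _)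
      _ ≤ t ^ p := hB2
  -- Bound 3 (gaussian tail)
  have hbound3 : |(-(G / (Nat.factorial k : ℝ))) * ∫ u in Ioi δ, q u| ≤ t ^ p := by
    have hqnn : 0 ≤ ∫ u in Ioi δ, q u :=
      setIntegral_nonneg measurableSet_Ioi (fun x hx => by
        simp only [hqdef]
        have hx' : (0:ℝ) < x := lt_trans hδ0 hx
        positivity)
    rw [abs_mul, abs_neg, abs_div, Nat.abs_cast, abs_of_nonneg hqnn]
    have hpt : ∀ u ∈ Ioi δ, q u ≤ Real.exp (-(l * δ ^ 2 / 2 * t)) * (u ^ k * Real.exp (-(l / 2 * u ^ 2))) := by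
      intro u hu
      have hu' : δ < u := hu
      have hupos : (0:ℝ) < u := lt_trans hδ0 hu'
      have h2 : δ ^ 2 ≤ u ^ 2 := by
        have := pow_le_pow_left₀ hδ0.le hu'.le 2
        simpa using this
      have harg : -(t * l * u ^ 2) ≤ -(l * δ ^ 2 / 2 * t) + -(l / 2 * u ^ 2) :=
        aux_harg hl0 h1t h2
      simp only [hqdef]
      calc u ^ k * Real.exp (-(t * l * u ^ 2))
          ≤ u ^ k * (Real.exp (-(l * δ ^ 2 / 2 * t)) * Real.exp (-(l / 2 * u ^ 2))) := by
            rw [← Real.exp_add]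
            exact mul_le_mul_of_nonneg_left (Real.exp_le_exp.mpr harg) (by positivity)
        _ = Real.exp (-(l * δ ^ 2 / 2 * t)) * (u ^ k * Real.exp (-(l / 2 * u ^ 2))) := by ring
    have hint1 : IntegrableOn (fun u : ℝ => u ^ k * Real.exp (-(l / 2 * u ^ 2))) (Ioi δ) :=
      (gauss_integrable k (by positivity)).mono_set (Ioi_subset_Ioi hδ0.le)
    calc |G| / (Nat.factorial k : ℝ) * ∫ u in Ioi δ, q u
        ≤ |G| / (Nat.factorial k : ℝ) * (Real.exp (-(l * δ ^ 2 / 2 * t)) * Kq) := by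
          refine mul_le_mul_of_nonneg_left ?_ (by positivity)
          calc (∫ u in Ioi δ, q u)
              ≤ ∫ u in Ioi δ, Real.exp (-(l * δ ^ 2 / 2 * t)) * (u ^ k * Real.exp (-(l / 2 * u ^ 2))) :=
                setIntegral_mono_on (hintq.mono_set (Ioi_subset_Ioi hδ0.le))
                  (hint1.const_mul _) measurableSet_Ioi hpt
            _ = Real.exp (-(l * δ ^ 2 / 2 * t)) * ∫ u in Ioi δ, u ^ k * Real.exp (-(l / 2 * u ^ 2)) :=
                integral_const_mul _ _
            _ ≤ Real.exp (-(l * δ ^ 2 / 2 * t)) * Kq := by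
                refine mul_le_mul_of_nonneg_left ?_ (Real.exp_pos _).le
                rw [hKqdef]
                refine setIntegral_mono_set (gauss_integrable k (by positivity)) ?_
                  (HasSubset.Subset.eventuallyLE (Ioi_subset_Ioi hδ0.le))
                refine (ae_restrict_iff' measurableSet_Ioi).mpr (Filter.Eventually.of_forall fun x hx => ?_)
                have hx' : (0:ℝ) < x := hx
                positivity
      _ = (|G| / (Nat.factorial k : ℝ) * Kq) * Real.exp (-(l * δ ^ 2 / 2 * t)) := by ring
      _ ≤ t ^ p := hB1
  have := add_le_add (add_le_add hbound1 hbound2) hbound3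
  linarith
end

section
/- Let $a<b$, let $h:[a,b]\to\mathbb{R}$ be three times continuously differentiable, attaining its maximum over $[a,b]$ only at the endpoint $c=a$, with $h'(a)\neq 0$ and $h''(a)\neq 0$. Let $k$ be a nonnegative integer and let $g:[a,b]\to\mathbb{R}$ be $(k+1)$-times continuously differentiable with $g(a)=g'(a)=\cdots=g^{(k-1)}(a)=0$ and $g^{(k)}(a)\neq 0$. Then, as $t\to\infty$, $\int_a^b e^{t h(x)} g(x)\,dx = e^{t h(a)}\Big( t^{-1-k}\, g^{(k)}(a)\, (h'(a))^{-1-k}\, (-1)^{k+1} + O(t^{-2-k})\Big)$. -/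
open Real MeasureTheory Set
open scoped Nat

lemma lapAux_integrableOn (n : ℕ) {r : ℝ} (hr : 0 < r) :
    IntegrableOn (fun u : ℝ => u ^ n * Real.exp (-(r * u))) (Set.Ioi 0) := by
  have h := integrableOn_rpow_mul_exp_neg_mul_rpow (s := (n : ℝ)) (p := 1)
    (lt_of_lt_of_le neg_one_lt_zero (Nat.cast_nonneg n)) one_pos hr
  refine h.congr_fun (fun x hx => ?_) measurableSet_Ioi
  beta_reduce
  rw [Real.rpow_one, Real.rpow_natCast, neg_mul]

lemma lapAux_integral (n : ℕ) {r : ℝ} (hr : 0 < r) :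
    ∫ u in Set.Ioi (0 : ℝ), u ^ n * Real.exp (-(r * u)) = (n ! : ℝ) / r ^ (n + 1) := by
  have h := Real.integral_rpow_mul_exp_neg_mul_Ioi (a := (n : ℝ) + 1) (r := r)
    (by positivity) hr
  have h2 : ∀ x ∈ Set.Ioi (0 : ℝ),
      x ^ ((n : ℝ) + 1 - 1) * Real.exp (-(r * x)) = x ^ n * Real.exp (-(r * x)) := by
    intro x _
    rw [add_sub_cancel_right, Real.rpow_natCast]
  rw [setIntegral_congr_fun measurableSet_Ioi h2] at h
  rw [h, Real.Gamma_nat_eq_factorial,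
    show ((n : ℝ) + 1) = ((n + 1 : ℕ) : ℝ) by push_cast; ring, Real.rpow_natCast]
  rw [div_pow, one_pow]
  field_simp

lemma lapAux_exp_sub_one (z : ℝ) : |Real.exp z - 1| ≤ |z| * Real.exp |z| := by
  rcases le_or_gt 0 z with hz | hz
  · rw [abs_of_nonneg hz,
      abs_of_nonneg (by linarith [Real.one_le_exp hz] : (0:ℝ) ≤ Real.exp z - 1)]
    have h := Real.add_one_le_exp (-z)
    have hp := Real.exp_pos z
    have key : (1 - z) * Real.exp z ≤ 1 := by
      have h3 := mul_le_mul_of_nonneg_right h hp.le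
      rw [← Real.exp_add, neg_add_cancel, Real.exp_zero] at h3
      nlinarith
    nlinarith
  · rw [abs_of_neg hz,
      abs_of_neg (show Real.exp z - 1 < 0 by
        have := Real.exp_lt_one_iff.mpr hz; linarith)]
    have h := Real.add_one_le_exp z
    have h2 : (1:ℝ) ≤ Real.exp (-z) := Real.one_le_exp (by linarith)
    nlinarith

lemma lapAux_exp_neg_le (m : ℕ) {x : ℝ} (hx : 0 < x) :
    Real.exp (-x) ≤ (m ! : ℝ) / x ^ m := by
  have h1 : x ^ m / (m ! : ℝ) ≤ Real.exp x := by
    calc x ^ m / (m ! : ℝ) ≤ ∑ i ∈ Finset.range (m + 1), x ^ i / (i ! : ℝ) :=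
          Finset.single_le_sum (f := fun i => x ^ i / (i ! : ℝ))
            (fun i _ => by positivity) (Finset.self_mem_range_succ m)
      _ ≤ Real.exp x := Real.sum_le_exp_of_nonneg hx.le _
  rw [Real.exp_neg, inv_le_comm₀ (Real.exp_pos x) (by positivity), inv_div]
  exact h1

lemma lapAux_key {η r K : ℝ} (hη : 0 < η) (hr : 0 < r) (hK : 0 ≤ K) (m : ℕ) {F : ℝ → ℝ}
    (hF : ContinuousOn F (Set.Icc 0 η))
    (hb : ∀ u ∈ Set.Icc (0:ℝ) η, |F u| ≤ K * (u ^ m * Real.exp (-(r * u)))) :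
    |∫ u in (0:ℝ)..η, F u| ≤ K * ((m ! : ℝ) / r ^ (m + 1)) := by
  have hmaj : IntervalIntegrable (fun u : ℝ => K * (u ^ m * Real.exp (-(r * u)))) volume 0 η := by
    apply ContinuousOn.intervalIntegrable
    apply Continuous.continuousOn
    continuity
  have h1 : ‖∫ u in (0:ℝ)..η, F u‖ ≤ |∫ u in (0:ℝ)..η, K * (u ^ m * Real.exp (-(r * u)))| := by
    refine intervalIntegral.norm_integral_le_abs_of_norm_le (f := F) (μ := volume) ?_ hmaj
    filter_upwards [MeasureTheory.self_mem_ae_restrict measurableSet_uIoc] with t ht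
    have ht' : t ∈ Set.Icc (0:ℝ) η := Set.mem_Icc_of_Ioc (Set.uIoc_of_le hη.le ▸ ht)
    exact hb t ht'
  rw [Real.norm_eq_abs] at h1
  refine h1.trans ?_
  rw [intervalIntegral.integral_const_mul, abs_mul, abs_of_nonneg hK]
  have hInn : (0:ℝ) ≤ ∫ u in (0:ℝ)..η, u ^ m * Real.exp (-(r * u)) :=
    intervalIntegral.integral_nonneg hη.le (fun u hu => by
      have : (0:ℝ) ≤ u := hu.1
      positivity)
  rw [abs_of_nonneg hInn]
  refine mul_le_mul_of_nonneg_left ?_ hK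
  rw [intervalIntegral.integral_of_le hη.le, ← lapAux_integral m hr]
  refine setIntegral_mono_set (lapAux_integrableOn m hr) ?_ ?_
  · filter_upwards [MeasureTheory.self_mem_ae_restrict measurableSet_Ioi] with t ht
    have : (0:ℝ) < t := ht
    positivity
  · exact (Set.Ioc_subset_Ioi_self).eventuallyLE

set_option maxHeartbeats 2000000 in
/-- Laplace's method, maximum at the left endpoint `a` with `h'(a) ≠ 0`:
`∫ e^{th} g = e^{th(a)} (t^(-1-k) g^(k)(a) (h'(a))^(-1-k) (-1)^(k+1) + O(t^(-2-k)))`. -/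
theorem laplace_left_endpoint_noncritical
    (a b : ℝ) (hab : a < b)
    (h g : ℝ → ℝ) (k : ℕ)
    (hh : ContDiffOn ℝ 3 h (Set.Icc a b))
    (hmax : ∀ x ∈ Set.Icc a b, x ≠ a → h x < h a)
    (hh1 : derivWithin h (Set.Icc a b) a ≠ 0)
    (hh2 : iteratedDerivWithin 2 h (Set.Icc a b) a ≠ 0)
    (hg : ContDiffOn ℝ (k + 1) g (Set.Icc a b))
    (hgvanish : ∀ i < k, iteratedDerivWithin i g (Set.Icc a b) a = 0)
    (hgk : iteratedDerivWithin k g (Set.Icc a b) a ≠ 0) :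
    ∃ C > 0, ∃ T > 0, ∀ t > T,
      |(∫ x in a..b, Real.exp (t * h x) * g x) -
        Real.exp (t * h a) * t ^ (-(1 : ℝ) - (k : ℝ)) *
          iteratedDerivWithin k g (Set.Icc a b) a *
          (derivWithin h (Set.Icc a b) a) ^ (-1 - (k : ℤ)) * (-1 : ℝ) ^ (k + 1)| ≤
        C * Real.exp (t * h a) * t ^ (-(2 : ℝ) - (k : ℝ)) := by
  clear hh2
  set s : Set ℝ := Set.Icc a b with hsdef
  set d : ℝ := derivWithin h s a with hddef
  set gk : ℝ := iteratedDerivWithin k g s a with hgkdef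
  -- the one-sided derivative at the max is negative
  have hd0 : d < 0 := by
    have hdiff : DifferentiableWithinAt ℝ h s a :=
      (hh.differentiableOn (by norm_num)) a (Set.left_mem_Icc.mpr hab.le)
    have hds := hdiff.hasDerivWithinAt
    rw [hasDerivWithinAt_iff_tendsto_slope] at hds
    have hsub : Set.Ioc a b ⊆ s \ {a} := fun x hx => ⟨⟨hx.1.le, hx.2⟩, ne_of_gt hx.1⟩
    have hne : (nhdsWithin a (s \ {a})).NeBot := by
      rw [← mem_closure_iff_nhdsWithin_neBot]
      refine closure_mono hsub ?_
      rw [closure_Ioc hab.ne]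
      exact Set.left_mem_Icc.mpr hab.le
    have hle : d ≤ 0 := by
      refine le_of_tendsto hds ?_
      refine Filter.eventually_of_mem self_mem_nhdsWithin fun x hx => ?_
      rw [slope_def_field]
      apply div_nonpos_of_nonpos_of_nonneg
      · exact sub_nonpos.mpr (hmax x hx.1 hx.2).le
      · exact sub_nonneg.mpr hx.1.1
    exact lt_of_le_of_ne hle hh1
  set q : ℝ := -d with hqdef
  have hq : 0 < q := neg_pos.mpr hd0
  set c : ℝ := (k ! : ℝ)⁻¹ * gk with hcdef
  have huD : UniqueDiffOn ℝ s := uniqueDiffOn_Icc hab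
  -- Taylor expansion of g at a up to order k
  obtain ⟨Mg, hMg⟩ := exists_taylor_mean_remainder_bound hab.le hg
  have htayg : ∀ x : ℝ, taylorWithinEval g k s a x = c * (x - a) ^ k := by
    intro x
    rw [taylor_within_apply, Finset.sum_eq_single_of_mem k (Finset.self_mem_range_succ k)]
    · rw [smul_eq_mul]; ring
    · intro i hi hik
      have hik' : i < k := lt_of_le_of_ne (Nat.lt_succ_iff.mp (Finset.mem_range.mp hi)) hik
      rw [hgvanish i hik', smul_zero]
  have hTg : ∀ x ∈ s, |g x - c * (x - a) ^ k| ≤ Mg * (x - a) ^ (k + 1) := by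
    intro x hx
    have h2 := hMg x hx
    rwa [htayg x, Real.norm_eq_abs] at h2
  -- Taylor expansion of h at a up to order 1
  obtain ⟨Mh, hMh⟩ := exists_taylor_mean_remainder_bound (n := 1) hab.le (hh.of_le (by norm_num))
  have htayh : ∀ x : ℝ, taylorWithinEval h 1 s a x = h a + (x - a) * d := by
    intro x
    rw [taylor_within_apply, Finset.sum_range_succ, Finset.sum_range_one,
      iteratedDerivWithin_one]
    simp [iteratedDerivWithin_zero]
    exact Or.inl hddef.symm
  have hTh : ∀ x ∈ s, |h x - (h a + (x - a) * d)| ≤ Mh * (x - a) ^ 2 := by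
    intro x hx
    have h2 := hMh x hx
    rwa [htayh x, Real.norm_eq_abs] at h2
  set Mg0 : ℝ := |Mg| + 1 with hMg0def
  have hMg0 : 0 < Mg0 := by rw [hMg0def]; positivity
  set Mh0 : ℝ := |Mh| + 1 with hMh0def
  have hMh0 : 0 < Mh0 := by rw [hMh0def]; positivity
  set η : ℝ := min (b - a) (q / (2 * Mh0)) with hηdef
  have hη : 0 < η := lt_min (by linarith) (by positivity)
  have hηba : η ≤ b - a := min_le_left _ _
  have hηq : Mh0 * η ≤ q / 2 := by
    calc Mh0 * η ≤ Mh0 * (q / (2 * Mh0)) :=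
          mul_le_mul_of_nonneg_left (min_le_right _ _) hMh0.le
      _ = q / 2 := by field_simp
  -- away from a, h is below the max by δ
  have hsub2 : Set.Icc (a + η) b ⊆ s := Set.Icc_subset_Icc (by linarith) le_rfl
  obtain ⟨x₀, hx₀mem, hx₀max⟩ := isCompact_Icc.exists_isMaxOn
    (Set.nonempty_Icc.mpr (by linarith)) (hh.continuousOn.mono hsub2)
  set δ : ℝ := h a - h x₀ with hδdef
  have hδ : 0 < δ := by
    have h3 : a + η ≤ x₀ := hx₀mem.1
    have h2 := hmax x₀ (hsub2 hx₀mem) (ne_of_gt (by linarith))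
    rw [hδdef]; linarith
  have hδb : ∀ x ∈ Set.Icc (a + η) b, h x - h a ≤ -δ := by
    intro x hx
    have h2 : h x ≤ h x₀ := hx₀max hx
    rw [hδdef]; linarith
  -- a bound for g
  obtain ⟨Gb, hGb⟩ := isCompact_Icc.exists_bound_of_continuousOn hg.continuousOn
  set Gb0 : ℝ := |Gb| + 1 with hGb0def
  have hGb0 : 0 < Gb0 := by rw [hGb0def]; positivity
  have hGb' : ∀ x ∈ s, |g x| ≤ Gb0 := by
    intro x hx
    have h2 := hGb x hx
    rw [Real.norm_eq_abs] at h2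
    have h3 : Gb ≤ |Gb| := le_abs_self Gb
    rw [hGb0def]; linarith
  -- quadratic control of h near a
  have hmem' : ∀ u ∈ Set.Icc (0:ℝ) η, a + u ∈ s := by
    intro u hu
    exact ⟨by linarith [hu.1], by linarith [hu.2, hηba]⟩
  have hφ2 : ∀ u ∈ Set.Icc (0:ℝ) η, |h (a + u) - h a + q * u| ≤ Mh0 * u ^ 2 := by
    intro u hu
    have h2 := hTh (a + u) (hmem' u hu)
    rw [add_sub_cancel_left] at h2
    have h3 : h (a + u) - (h a + u * d) = h (a + u) - h a + q * u := by
      rw [hqdef]; ring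
    rw [h3] at h2
    have h4 : Mh ≤ Mh0 := by rw [hMh0def]; have := le_abs_self Mh; linarith
    nlinarith [sq_nonneg u, abs_nonneg (h (a + u) - h a + q * u)]
  have hφ1 : ∀ u ∈ Set.Icc (0:ℝ) η, h (a + u) - h a ≤ -((q / 2) * u) := by
    intro u hu
    have h2 := (abs_le.mp (hφ2 u hu)).2
    have hu0 : 0 ≤ u := hu.1
    have h5 : Mh0 * u ≤ q / 2 := le_trans (mul_le_mul_of_nonneg_left hu.2 hMh0.le) hηq
    nlinarith
  -- the constants
  set C1 : ℝ := Mg0 * (((k+1)! : ℝ) * (2/q) ^ (k+2)) with hC1def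
  set C2 : ℝ := |c| * Mh0 * (((k+2)! : ℝ) * (2/q) ^ (k+3)) with hC2def
  set C3 : ℝ := Gb0 * (b - a) * (((k+2)! : ℝ) / δ ^ (k+2)) with hC3def
  set C4 : ℝ := |c| * ((k ! : ℝ) * (2/q) ^ (k+1)) * (2 / (q * η)) with hC4def
  have h2q : (0:ℝ) < 2 / q := by positivity
  have hC1n : 0 ≤ C1 := by
    rw [hC1def]
    exact mul_nonneg hMg0.le (mul_nonneg (Nat.cast_nonneg _) (pow_pos h2q (k+2)).le)
  have hC2n : 0 ≤ C2 := by
    rw [hC2def]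
    exact mul_nonneg (mul_nonneg (abs_nonneg c) hMh0.le)
      (mul_nonneg (Nat.cast_nonneg _) (pow_pos h2q (k+3)).le)
  have hC3n : 0 ≤ C3 := by
    rw [hC3def]
    exact mul_nonneg (mul_nonneg hGb0.le (by linarith))
      (div_nonneg (Nat.cast_nonneg _) (pow_pos hδ (k+2)).le)
  have hC4n : 0 ≤ C4 := by
    rw [hC4def]
    exact mul_nonneg (mul_nonneg (abs_nonneg c)
      (mul_nonneg (Nat.cast_nonneg _) (pow_pos h2q (k+1)).le))
      (div_nonneg (by norm_num) (mul_pos hq hη).le)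
  refine ⟨C1 + C2 + C3 + C4 + 1, by linarith, 1, one_pos, ?_⟩
  intro t ht
  have ht0 : (0:ℝ) < t := lt_trans one_pos ht
  -- notation for this fixed t
  set tq : ℝ := t * q with htqdef
  have htq : 0 < tq := mul_pos ht0 hq
  set r : ℝ := t * (q / 2) with hrdef
  have hr : 0 < r := mul_pos ht0 (by positivity)
  set E : ℝ → ℝ := fun x => Real.exp (t * (h x - h a)) * g x with hEdef
  have hconth : ContinuousOn h s := hh.continuousOn
  have hcontg : ContinuousOn g s := hg.continuousOn
  have hEcont : ContinuousOn E s :=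
    (Real.continuous_exp.comp_continuousOn
      (continuousOn_const.mul (hconth.sub continuousOn_const))).mul hcontg
  have huIcc1 : Set.uIcc a (a + η) ⊆ s := by
    rw [Set.uIcc_of_le (by linarith : a ≤ a + η)]
    exact Set.Icc_subset_Icc le_rfl (by linarith)
  have hint1 : IntervalIntegrable E volume a (a + η) := (hEcont.mono huIcc1).intervalIntegrable
  have huIcc2 : Set.uIcc (a + η) b ⊆ s := by
    rw [Set.uIcc_of_le (by linarith : a + η ≤ b)]
    exact Set.Icc_subset_Icc (by linarith) le_rfl
  have hint2 : IntervalIntegrable E volume (a + η) b := (hEcont.mono huIcc2).intervalIntegrable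
  -- factor out exp(t h(a))
  have hJ : (∫ x in a..b, Real.exp (t * h x) * g x) = Real.exp (t * h a) * ∫ x in a..b, E x := by
    rw [← intervalIntegral.integral_const_mul]
    apply intervalIntegral.integral_congr
    intro x _
    simp only [hEdef]
    rw [← mul_assoc, ← Real.exp_add, show t * h a + t * (h x - h a) = t * h x from by ring]
  have hsplitJ : (∫ x in a..b, E x) = (∫ x in a..(a + η), E x) + ∫ x in (a + η)..b, E x :=
    (intervalIntegral.integral_add_adjacent_intervals hint1 hint2).symm
  have hshift : (∫ x in a..(a + η), E x) = ∫ u in (0:ℝ)..η, E (a + u) := by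
    have h2 := intervalIntegral.integral_comp_sub_right (a := a) (b := a + η)
      (fun u => E (a + u)) a
    simp only [sub_self, add_sub_cancel_left] at h2
    rw [← h2]
    apply intervalIntegral.integral_congr
    intro x _
    simp only []
    rw [show a + (x - a) = x from by ring]
  -- the model integrand
  set W : ℝ → ℝ := fun u => c * (u ^ k * Real.exp (-(tq * u))) with hWdef
  have hWint : IntegrableOn W (Set.Ioi 0) := (lapAux_integrableOn k htq).const_mul c
  have hWioc : IntegrableOn W (Set.Ioc 0 η) := hWint.mono_set Set.Ioc_subset_Ioi_self
  have hWioi : IntegrableOn W (Set.Ioi η) := hWint.mono_set (Set.Ioi_subset_Ioi hη.le)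
  have hWsplit : (∫ u in Set.Ioi (0:ℝ), W u) =
      (∫ u in (0:ℝ)..η, W u) + ∫ u in Set.Ioi η, W u := by
    rw [intervalIntegral.integral_of_le hη.le,
      ← MeasureTheory.setIntegral_union (Set.Ioc_disjoint_Ioi le_rfl) measurableSet_Ioi
        hWioc hWioi, Set.Ioc_union_Ioi_eq_Ioi hη.le]
  have hWval : (∫ u in Set.Ioi (0:ℝ), W u) = c * ((k ! : ℝ) / tq ^ (k + 1)) := by
    simp only [hWdef]
    rw [MeasureTheory.integral_const_mul, lapAux_integral k htq]
  -- the two local error integrands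
  set P : ℝ → ℝ := fun u => Real.exp (t * (h (a + u) - h a)) * (g (a + u) - c * u ^ k) with hPdef
  set Q : ℝ → ℝ := fun u =>
    c * ((Real.exp (t * (h (a + u) - h a)) - Real.exp (-(tq * u))) * u ^ k) with hQdef
  have hmapsto : Set.MapsTo (fun u : ℝ => a + u) (Set.Icc 0 η) s := fun u hu => hmem' u hu
  have hcont_h : ContinuousOn (fun u : ℝ => h (a + u)) (Set.Icc 0 η) :=
    hconth.comp ((continuous_const.add continuous_id).continuousOn) hmapsto
  have hcont_g : ContinuousOn (fun u : ℝ => g (a + u)) (Set.Icc 0 η) :=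
    hcontg.comp ((continuous_const.add continuous_id).continuousOn) hmapsto
  have hcont_exp : ContinuousOn (fun u : ℝ => Real.exp (t * (h (a + u) - h a)))
      (Set.Icc 0 η) :=
    Real.continuous_exp.comp_continuousOn
      (continuousOn_const.mul (hcont_h.sub continuousOn_const))
  have hcontP : ContinuousOn P (Set.Icc 0 η) :=
    hcont_exp.mul (hcont_g.sub (continuousOn_const.mul (continuous_pow k).continuousOn))
  have hcontQ : ContinuousOn Q (Set.Icc 0 η) :=
    continuousOn_const.mul ((hcont_exp.sub
      ((Real.continuous_exp.comp (Continuous.neg (continuous_const.mul continuous_id))).continuousOn)).mul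
      (continuous_pow k).continuousOn)
  have hEW : ∀ u : ℝ, E (a + u) - W u = P u + Q u := by
    intro u
    simp only [hEdef, hWdef, hPdef, hQdef]
    ring
  have hintPa : IntervalIntegrable P volume 0 η :=
    (show ContinuousOn P (Set.uIcc 0 η) from by
      rw [Set.uIcc_of_le hη.le]; exact hcontP).intervalIntegrable
  have hintQa : IntervalIntegrable Q volume 0 η :=
    (show ContinuousOn Q (Set.uIcc 0 η) from by
      rw [Set.uIcc_of_le hη.le]; exact hcontQ).intervalIntegrable
  have hcontW : Continuous W := by
    rw [hWdef]
    exact continuous_const.mul ((continuous_pow k).mul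
      (Real.continuous_exp.comp (Continuous.neg (continuous_const.mul continuous_id))))
  have hintWa : IntervalIntegrable W volume 0 η := hcontW.intervalIntegrable _ _
  have hintEa : IntervalIntegrable (fun u => E (a + u)) volume 0 η :=
    (show ContinuousOn (fun u => E (a + u)) (Set.uIcc 0 η) from by
      rw [Set.uIcc_of_le hη.le]; exact hcont_exp.mul hcont_g).intervalIntegrable
  have hkey0 : (∫ u in (0:ℝ)..η, E (a + u)) - (∫ u in (0:ℝ)..η, W u) =
      (∫ u in (0:ℝ)..η, P u) + (∫ u in (0:ℝ)..η, Q u) := by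
    rw [← intervalIntegral.integral_sub hintEa hintWa,
      ← intervalIntegral.integral_add hintPa hintQa]
    apply intervalIntegral.integral_congr
    intro x _
    exact hEW x
  -- bound on P
  have hbP : |∫ u in (0:ℝ)..η, P u| ≤ Mg0 * (((k+1)! : ℝ) / r ^ (k + 1 + 1)) := by
    refine lapAux_key hη hr hMg0.le (k+1) hcontP ?_
    intro u hu
    have hu0 : 0 ≤ u := hu.1
    have hx := hmem' u hu
    have hb1 : |g (a + u) - c * u ^ k| ≤ Mg0 * u ^ (k+1) := by
      have h2 := hTg (a + u) hx
      rw [add_sub_cancel_left] at h2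
      have h3 : Mg ≤ Mg0 := by rw [hMg0def]; have := le_abs_self Mg; linarith
      exact le_trans h2 (mul_le_mul_of_nonneg_right h3 (pow_nonneg hu0 (k+1)))
    have hb2 : Real.exp (t * (h (a + u) - h a)) ≤ Real.exp (-(r * u)) := by
      apply Real.exp_le_exp.mpr
      have h2 := hφ1 u hu
      calc t * (h (a + u) - h a) ≤ t * (-((q / 2) * u)) :=
            mul_le_mul_of_nonneg_left h2 ht0.le
        _ = -(r * u) := by rw [hrdef]; ring
    simp only [hPdef]
    rw [abs_mul, abs_of_nonneg (Real.exp_pos _).le]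
    calc Real.exp (t * (h (a + u) - h a)) * |g (a + u) - c * u ^ k| ≤
          Real.exp (-(r * u)) * (Mg0 * u ^ (k+1)) :=
        mul_le_mul hb2 hb1 (abs_nonneg _) (Real.exp_pos _).le
      _ = Mg0 * (u ^ (k+1) * Real.exp (-(r * u))) := by ring
  -- bound on Q
  have hbQ : |∫ u in (0:ℝ)..η, Q u| ≤
      (|c| * (t * Mh0)) * (((k+2)! : ℝ) / r ^ (k + 2 + 1)) := by
    refine lapAux_key hη hr (by positivity) (k+2) hcontQ ?_
    intro u hu
    have hu0 : 0 ≤ u := hu.1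
    have hA := hφ2 u hu
    have hA2 : |t * (h (a + u) - h a) - -(tq * u)| ≤ t * (Mh0 * u ^ 2) := by
      rw [show t * (h (a + u) - h a) - -(tq * u) = t * (h (a + u) - h a + q * u) from by
        rw [htqdef]; ring, abs_mul, abs_of_nonneg ht0.le]
      exact mul_le_mul_of_nonneg_left hA ht0.le
    have hA3 : t * (Mh0 * u ^ 2) ≤ r * u := by
      have h5 : Mh0 * u ≤ q / 2 := le_trans (mul_le_mul_of_nonneg_left hu.2 hMh0.le) hηq
      rw [hrdef]
      calc t * (Mh0 * u ^ 2) = t * (Mh0 * u * u) := by ring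
        _ ≤ t * (q / 2 * u) :=
          mul_le_mul_of_nonneg_left (mul_le_mul_of_nonneg_right h5 hu0) ht0.le
        _ = t * (q / 2) * u := by ring
    have hdiffexp : |Real.exp (t * (h (a + u) - h a)) - Real.exp (-(tq * u))| ≤
        (t * (Mh0 * u ^ 2)) * Real.exp (-(r * u)) := by
      set A := t * (h (a + u) - h a) with hAdef
      set B := -(tq * u) with hBdef
      have h6 : Real.exp A - Real.exp B = Real.exp B * (Real.exp (A - B) - 1) := by
        rw [mul_sub, ← Real.exp_add, mul_one]
        congr 1
        ring
      rw [h6, abs_mul, abs_of_nonneg (Real.exp_pos B).le]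
      calc Real.exp B * |Real.exp (A - B) - 1| ≤
            Real.exp B * (|A - B| * Real.exp |A - B|) :=
          mul_le_mul_of_nonneg_left (lapAux_exp_sub_one (A - B)) (Real.exp_pos B).le
        _ ≤ Real.exp B * ((t * (Mh0 * u ^ 2)) * Real.exp (r * u)) := by
            refine mul_le_mul_of_nonneg_left ?_ (Real.exp_pos B).le
            refine mul_le_mul hA2 (Real.exp_le_exp.mpr (le_trans hA2 hA3))
              (Real.exp_pos _).le (by positivity)
        _ = (t * (Mh0 * u ^ 2)) * Real.exp (-(r * u)) := by
            rw [show Real.exp B * (t * (Mh0 * u ^ 2) * Real.exp (r * u)) =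
              t * (Mh0 * u ^ 2) * (Real.exp B * Real.exp (r * u)) from by ring,
              ← Real.exp_add, show B + r * u = -(r * u) from by
                rw [hBdef, htqdef, hrdef]; ring]
    simp only [hQdef]
    rw [abs_mul]
    have hstep : |(Real.exp (t * (h (a + u) - h a)) - Real.exp (-(tq * u))) * u ^ k| ≤
        t * (Mh0 * u ^ 2) * Real.exp (-(r * u)) * u ^ k := by
      rw [abs_mul, abs_pow, abs_of_nonneg hu0]
      exact mul_le_mul_of_nonneg_right hdiffexp (pow_nonneg hu0 k)
    refine le_trans (mul_le_mul_of_nonneg_left hstep (abs_nonneg c)) (le_of_eq ?_)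
    rw [pow_add]
    ring
  -- bound on the outer integral
  have hbB : |∫ x in (a + η)..b, E x| ≤ (Gb0 * Real.exp (-(t * δ))) * (b - a) := by
    have h7 : ∀ x ∈ Set.uIoc (a + η) b, ‖E x‖ ≤ Gb0 * Real.exp (-(t * δ)) := by
      intro x hx
      rw [Set.uIoc_of_le (by linarith : a + η ≤ b)] at hx
      have hxI : x ∈ Set.Icc (a + η) b := ⟨hx.1.le, hx.2⟩
      have hxs : x ∈ s := hsub2 hxI
      rw [Real.norm_eq_abs]
      simp only [hEdef]
      rw [abs_mul, abs_of_nonneg (Real.exp_pos _).le]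
      have e1 : Real.exp (t * (h x - h a)) ≤ Real.exp (-(t * δ)) := by
        apply Real.exp_le_exp.mpr
        have h8 := hδb x hxI
        calc t * (h x - h a) ≤ t * (-δ) := mul_le_mul_of_nonneg_left h8 ht0.le
          _ = -(t * δ) := by ring
      calc Real.exp (t * (h x - h a)) * |g x| ≤ Real.exp (-(t * δ)) * Gb0 :=
            mul_le_mul e1 (hGb' x hxs) (abs_nonneg _) (Real.exp_pos _).le
        _ = Gb0 * Real.exp (-(t * δ)) := by ring
    have h8 := intervalIntegral.norm_integral_le_of_norm_le_const h7
    rw [Real.norm_eq_abs] at h8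
    calc |∫ x in (a + η)..b, E x| ≤ Gb0 * Real.exp (-(t * δ)) * |b - (a + η)| := h8
      _ ≤ Gb0 * Real.exp (-(t * δ)) * (b - a) := by
        refine mul_le_mul_of_nonneg_left ?_ (by positivity)
        rw [abs_of_nonneg (by linarith)]
        linarith
  -- bound on the tail of the model integral
  have hbT : |∫ u in Set.Ioi η, W u| ≤
      |c| * (Real.exp (-(r * η)) * ((k ! : ℝ) / r ^ (k + 1))) := by
    have hint3 : IntegrableOn (fun u : ℝ => u ^ k * Real.exp (-(tq * u))) (Set.Ioi η) :=
      (lapAux_integrableOn k htq).mono_set (Set.Ioi_subset_Ioi hη.le)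
    have hint4 : IntegrableOn
        (fun u : ℝ => Real.exp (-(r * η)) * (u ^ k * Real.exp (-(r * u)))) (Set.Ioi η) :=
      ((lapAux_integrableOn k hr).mono_set (Set.Ioi_subset_Ioi hη.le)).const_mul _
    have hmono : (∫ u in Set.Ioi η, u ^ k * Real.exp (-(tq * u))) ≤
        ∫ u in Set.Ioi η, Real.exp (-(r * η)) * (u ^ k * Real.exp (-(r * u))) := by
      refine MeasureTheory.setIntegral_mono_on hint3 hint4 measurableSet_Ioi ?_
      intro u hu
      have huη : η < u := hu
      have hu0 : 0 < u := lt_trans hη huη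
      have h9 : Real.exp (-(tq * u)) ≤ Real.exp (-(r * η)) * Real.exp (-(r * u)) := by
        rw [← Real.exp_add]
        apply Real.exp_le_exp.mpr
        rw [htqdef, hrdef]
        have h11 : t * (q / 2) * (η + u) ≤ t * (q / 2) * (2 * u) :=
          mul_le_mul_of_nonneg_left (by linarith) (by positivity)
        linarith
      calc u ^ k * Real.exp (-(tq * u)) ≤
            u ^ k * (Real.exp (-(r * η)) * Real.exp (-(r * u))) :=
          mul_le_mul_of_nonneg_left h9 (pow_nonneg hu0.le k)
        _ = Real.exp (-(r * η)) * (u ^ k * Real.exp (-(r * u))) := by ring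
    have hmono2 : (∫ u in Set.Ioi η, Real.exp (-(r * η)) * (u ^ k * Real.exp (-(r * u)))) ≤
        Real.exp (-(r * η)) * ((k ! : ℝ) / r ^ (k + 1)) := by
      rw [MeasureTheory.integral_const_mul]
      refine mul_le_mul_of_nonneg_left ?_ (Real.exp_pos _).le
      rw [← lapAux_integral k hr]
      refine setIntegral_mono_set (lapAux_integrableOn k hr) ?_
        (Set.Ioi_subset_Ioi hη.le).eventuallyLE
      filter_upwards [MeasureTheory.self_mem_ae_restrict measurableSet_Ioi] with u hu
      have hu0 : (0:ℝ) < u := hu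
      positivity
    have hnn : 0 ≤ ∫ u in Set.Ioi η, u ^ k * Real.exp (-(tq * u)) := by
      refine setIntegral_nonneg measurableSet_Ioi ?_
      intro u hu
      have hu0 : 0 ≤ u := (le_trans hη.le (le_of_lt hu))
      positivity
    have h10 : (∫ u in Set.Ioi η, W u) = c * ∫ u in Set.Ioi η, u ^ k * Real.exp (-(tq * u)) := by
      simp only [hWdef]
      rw [MeasureTheory.integral_const_mul]
    rw [h10, abs_mul]
    refine mul_le_mul_of_nonneg_left ?_ (abs_nonneg c)
    rw [abs_of_nonneg hnn]
    exact le_trans hmono hmono2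
  -- algebra for the main term
  have hkfac : (k ! : ℝ) ≠ 0 := Nat.cast_ne_zero.mpr (Nat.factorial_ne_zero k)
  have hrpow1 : t ^ (-(1:ℝ) - (k:ℝ)) = (t ^ (k+1) : ℝ)⁻¹ := by
    rw [show (-(1:ℝ) - (k:ℝ)) = -((k+1 : ℕ) : ℝ) from by push_cast; ring,
      Real.rpow_neg ht0.le, Real.rpow_natCast]
  have hrpow2 : t ^ (-(2:ℝ) - (k:ℝ)) = (t ^ (k+2) : ℝ)⁻¹ := by
    rw [show (-(2:ℝ) - (k:ℝ)) = -((k+2 : ℕ) : ℝ) from by push_cast; ring,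
      Real.rpow_neg ht0.le, Real.rpow_natCast]
  have hzpow : d ^ (-1 - (k:ℤ)) * (-1:ℝ) ^ (k+1) = (q ^ (k+1))⁻¹ := by
    have h9 : d = -q := by rw [hqdef]; ring
    rw [h9, show (-1 - (k:ℤ)) = -((k+1 : ℕ) : ℤ) from by push_cast; ring,
      zpow_neg, zpow_natCast, neg_pow]
    rcases Nat.even_or_odd (k+1) with he | ho
    · rw [he.neg_one_pow]; ring
    · rw [ho.neg_one_pow]; rw [neg_one_mul, inv_neg]; ring
  have hMain : Real.exp (t * h a) * t ^ (-(1:ℝ) - (k:ℝ)) * gk * d ^ (-1 - (k:ℤ)) *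
      (-1:ℝ) ^ (k+1) = Real.exp (t * h a) * (c * ((k ! : ℝ) / tq ^ (k+1))) := by
    rw [hrpow1, mul_assoc, hzpow, hcdef, htqdef, mul_pow]
    field_simp
  have hgoalLHS : (∫ x in a..b, Real.exp (t * h x) * g x) -
      Real.exp (t * h a) * t ^ (-(1:ℝ) - (k:ℝ)) * gk * d ^ (-1 - (k:ℤ)) * (-1:ℝ) ^ (k+1)
      = Real.exp (t * h a) * (((∫ u in (0:ℝ)..η, P u) + (∫ u in (0:ℝ)..η, Q u))
          + (∫ x in (a + η)..b, E x) - (∫ u in Set.Ioi η, W u)) := by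
    rw [hJ, hMain, hsplitJ, hshift, ← hWval, hWsplit]
    linear_combination Real.exp (t * h a) * hkey0
  rw [hgoalLHS, abs_mul, abs_of_nonneg (Real.exp_pos _).le]
  -- the four error terms are all O(t^-(k+2))
  have hf1 : Mg0 * (((k+1)! : ℝ) / r ^ (k + 1 + 1)) = C1 / t ^ (k+2) := by
    rw [hC1def, hrdef, mul_pow]
    field_simp
    have e : ∀ n : ℕ, q ^ n * q⁻¹ ^ n = 1 := fun n => by
      rw [← mul_pow, mul_inv_cancel₀ hq.ne', one_pow]
    have e2 : ∀ n : ℕ, (1 / 2 : ℝ) ^ n * 2 ^ n = 1 := fun n => by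
      rw [← mul_pow]; norm_num
    clear_value q
    linear_combination ((-((q ^ k * q⁻¹ ^ k) * ((1 / 2 : ℝ) ^ k * 2 ^ k))) * e 2 - ((1 / 2 : ℝ) ^ k * 2 ^ k) * e k - e2 k)
  have hf2 : (|c| * (t * Mh0)) * (((k+2)! : ℝ) / r ^ (k + 2 + 1)) = C2 / t ^ (k+2) := by
    rw [hC2def, hrdef, mul_pow]
    field_simp
    have e : ∀ n : ℕ, q ^ n * q⁻¹ ^ n = 1 := fun n => by
      rw [← mul_pow, mul_inv_cancel₀ hq.ne', one_pow]
    have e2 : ∀ n : ℕ, (1 / 2 : ℝ) ^ n * 2 ^ n = 1 := fun n => by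
      rw [← mul_pow]; norm_num
    clear_value q
    linear_combination (|c| * t ^ 3 * t ^ k) * ((-((q ^ k * q⁻¹ ^ k) * ((1 / 2 : ℝ) ^ k * 2 ^ k))) * e 3 - ((1 / 2 : ℝ) ^ k * 2 ^ k) * e k - e2 k)
  have hf3 : (Gb0 * Real.exp (-(t * δ))) * (b - a) ≤ C3 / t ^ (k+2) := by
    have h12 : Real.exp (-(t * δ)) ≤ (((k+2)! : ℝ)) / (t * δ) ^ (k+2) :=
      lapAux_exp_neg_le (k+2) (mul_pos ht0 hδ)
    calc (Gb0 * Real.exp (-(t * δ))) * (b - a)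
        ≤ (Gb0 * ((((k+2)! : ℝ)) / (t * δ) ^ (k+2))) * (b - a) :=
          mul_le_mul_of_nonneg_right (mul_le_mul_of_nonneg_left h12 hGb0.le) (by linarith)
      _ = C3 / t ^ (k+2) := by
          rw [hC3def, mul_pow]
          field_simp
  have hf4 : |c| * (Real.exp (-(r * η)) * ((k ! : ℝ) / r ^ (k + 1))) ≤ C4 / t ^ (k+2) := by
    have h12 : Real.exp (-(r * η)) ≤ 1 / (r * η) := by
      have := lapAux_exp_neg_le 1 (mul_pos hr hη)
      simpa using this
    calc |c| * (Real.exp (-(r * η)) * ((k ! : ℝ) / r ^ (k + 1)))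
        ≤ |c| * ((1 / (r * η)) * ((k ! : ℝ) / r ^ (k + 1))) := by
          refine mul_le_mul_of_nonneg_left
            (mul_le_mul_of_nonneg_right h12 (by positivity)) (abs_nonneg c)
      _ = C4 / t ^ (k+2) := by
          rw [hC4def, hrdef, mul_pow]
          field_simp
          have e : ∀ n : ℕ, q ^ n * q⁻¹ ^ n = 1 := fun n => by
            rw [← mul_pow, mul_inv_cancel₀ hq.ne', one_pow]
          have e2 : ∀ n : ℕ, (1 / 2 : ℝ) ^ n * 2 ^ n = 1 := fun n => by
            rw [← mul_pow]; norm_num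
          clear_value q
          linear_combination (|c| * t ^ 2 * t ^ k) * ((-((q ^ k * q⁻¹ ^ k) * ((1 / 2 : ℝ) ^ k * 2 ^ k))) * e 1 - ((1 / 2 : ℝ) ^ k * 2 ^ k) * e k - e2 k)
  have hdiv : (C1 + C2 + C3 + C4) / t ^ (k+2)
      = C1 / t ^ (k+2) + C2 / t ^ (k+2) + C3 / t ^ (k+2) + C4 / t ^ (k+2) := by ring
  have habs : |((∫ u in (0:ℝ)..η, P u) + (∫ u in (0:ℝ)..η, Q u))
      + (∫ x in (a + η)..b, E x) - (∫ u in Set.Ioi η, W u)|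
      ≤ (C1 + C2 + C3 + C4) / t ^ (k+2) := by
    have t1 := hbP
    have t2 := hbQ
    rw [hf1] at t1
    rw [hf2] at t2
    have t3 := le_trans hbB hf3
    have t4 := le_trans hbT hf4
    have h13 := abs_add_le ((∫ u in (0:ℝ)..η, P u) + (∫ u in (0:ℝ)..η, Q u))
      (∫ x in (a + η)..b, E x)
    have h14 := abs_add_le (∫ u in (0:ℝ)..η, P u) (∫ u in (0:ℝ)..η, Q u)
    have h15 := abs_sub (((∫ u in (0:ℝ)..η, P u) + (∫ u in (0:ℝ)..η, Q u))
      + (∫ x in (a + η)..b, E x)) (∫ u in Set.Ioi η, W u)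
    linarith [h13, h14, h15, t1, t2, t3, t4, hdiv]
  have hpos : (0:ℝ) < t ^ (k+2) := pow_pos ht0 _
  have hfinal : |((∫ u in (0:ℝ)..η, P u) + (∫ u in (0:ℝ)..η, Q u))
      + (∫ x in (a + η)..b, E x) - (∫ u in Set.Ioi η, W u)|
      ≤ (C1 + C2 + C3 + C4 + 1) / t ^ (k+2) := by
    refine le_trans habs ?_
    exact (div_le_div_iff_of_pos_right hpos).mpr (by linarith)
  calc Real.exp (t * h a) * |((∫ u in (0:ℝ)..η, P u) + (∫ u in (0:ℝ)..η, Q u))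
      + (∫ x in (a + η)..b, E x) - (∫ u in Set.Ioi η, W u)|
      ≤ Real.exp (t * h a) * ((C1 + C2 + C3 + C4 + 1) / t ^ (k+2)) :=
        mul_le_mul_of_nonneg_left hfinal (Real.exp_pos _).le
    _ = (C1 + C2 + C3 + C4 + 1) * Real.exp (t * h a) * t ^ (-(2:ℝ) - (k:ℝ)) := by
        rw [hrpow2]
        ring
end

section
/- Let $a<b$, let $h:[a,b]\to\mathbb{R}$ be three times continuously differentiable, attaining its maximum over $[a,b]$ only at the endpoint $c=b$, with $h'(b)\neq 0$ and $h''(b)\neq 0$. Let $k$ be a nonnegative integer and let $g:[a,b]\to\mathbb{R}$ be $(k+1)$-times continuously differentiable with $g(b)=g'(b)=\cdots=g^{(k-1)}(b)=0$ and $g^{(k)}(b)\neq 0$. Then, as $t\to\infty$, $\int_a^b e^{t h(x)} g(x)\,dx = e^{t h(b)}\Big( t^{-1-k}\, g^{(k)}(b)\, (h'(b))^{-1-k}\, (-1)^{k} + O(t^{-2-k})\Big)$. -/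
open Real MeasureTheory Set Filter Topology


/-- One-sided bound: if `F b = 0` and `F' x ≥ -(K (b-x)^p)` on `[a,b]`, then
`F x ≤ K (b-x)^(p+1)` on `[a,b]`. -/
lemma laplace_aux_one_side {a b K : ℝ} {F F' : ℝ → ℝ} (p : ℕ)
    (hF : ∀ x ∈ Set.Icc a b, HasDerivWithinAt F (F' x) (Set.Icc a b) x)
    (hFb : F b = 0) (hK : 0 ≤ K)
    (hbd : ∀ x ∈ Set.Icc a b, -(K * (b - x) ^ p) ≤ F' x) :
    ∀ x ∈ Set.Icc a b, F x ≤ K * (b - x) ^ (p + 1) := by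
  intro x hx
  set u : ℝ → ℝ := fun y => K * (b - y) ^ (p + 1) / (p + 1) - F y with hu
  have hcont : ContinuousOn u (Set.Icc a b) := by
    apply ContinuousOn.sub
    · fun_prop
    · intro y hy; exact (hF y hy).continuousWithinAt
  have hderiv : ∀ y ∈ Set.Ioo a b,
      HasDerivAt u (-(K * (b - y) ^ p) - F' y) y := by
    intro y hy
    have h1 : HasDerivAt (fun y => K * (b - y) ^ (p + 1) / (p + 1))
        (-(K * (b - y) ^ p)) y := by
      have : HasDerivAt (fun y : ℝ => (b - y) ^ (p + 1))
          (((p : ℝ) + 1) * (b - y) ^ p * (-1)) y := by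
        have hb : HasDerivAt (fun y : ℝ => b - y) (-1) y :=
          (hasDerivAt_id y).const_sub b
        simpa using (hb.fun_pow (p + 1))
      have := (this.const_mul K).div_const ((p : ℝ) + 1)
      refine this.congr_deriv ?_
      have hp : ((p : ℝ) + 1) ≠ 0 := by positivity
      field_simp
    have h2 : HasDerivAt F (F' y) y := by
      have := hF y (Set.Ioo_subset_Icc_self hy)
      exact this.hasDerivAt (Icc_mem_nhds hy.1 hy.2)
    exact h1.sub h2
  have hanti : AntitoneOn u (Set.Icc a b) := by
    apply antitoneOn_of_deriv_nonpos (convex_Icc a b) hcont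
    · intro y hy
      rw [interior_Icc] at hy
      exact (hderiv y hy).differentiableAt.differentiableWithinAt
    · intro y hy
      rw [interior_Icc] at hy
      rw [(hderiv y hy).deriv]
      have := hbd y (Set.Ioo_subset_Icc_self hy)
      linarith
  have hub : u b ≤ u x :=
    hanti hx (Set.right_mem_Icc.2 (le_trans hx.1 hx.2)) hx.2
  have hub0 : u b = 0 := by
    simp [hu, hFb]
  have h1 : F x ≤ K * (b - x) ^ (p + 1) / (p + 1) := by
    have := hub; rw [hub0] at this; simp [hu] at this; linarith
  have h2 : K * (b - x) ^ (p + 1) / (p + 1) ≤ K * (b - x) ^ (p + 1) := by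
    have hnn : 0 ≤ K * (b - x) ^ (p + 1) := by
      have : 0 ≤ b - x := by linarith [hx.2]
      positivity
    have hp1 : (1 : ℝ) ≤ (p : ℝ) + 1 := by
      have := Nat.cast_nonneg (α := ℝ) p; linarith
    exact div_le_self hnn hp1
  linarith

lemma laplace_aux_abs_bound {a b K : ℝ} {F F' : ℝ → ℝ} (p : ℕ)
    (hF : ∀ x ∈ Set.Icc a b, HasDerivWithinAt F (F' x) (Set.Icc a b) x)
    (hFb : F b = 0) (hK : 0 ≤ K)
    (hbd : ∀ x ∈ Set.Icc a b, |F' x| ≤ K * (b - x) ^ p) :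
    ∀ x ∈ Set.Icc a b, |F x| ≤ K * (b - x) ^ (p + 1) := by
  intro x hx
  have h1 := laplace_aux_one_side p hF hFb hK
    (fun y hy => by have := (abs_le.1 (hbd y hy)).1; linarith) x hx
  have h2 := laplace_aux_one_side (F := fun y => -F y) (F' := fun y => -F' y) p
    (fun y hy => (hF y hy).neg) (by simp [hFb]) hK
    (fun y hy => by have := (abs_le.1 (hbd y hy)).2; simp; linarith) x hx
  rw [abs_le]; constructor <;> linarith

lemma laplace_taylor_bound {a b : ℝ} (hab : a < b) :
    ∀ (m : ℕ) (f : ℝ → ℝ) (K : ℝ), ContDiffOn ℝ (m + 1 : ℕ) f (Set.Icc a b) →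
      (∀ i < m, iteratedDerivWithin i f (Set.Icc a b) b = 0) → 0 ≤ K →
      (∀ x ∈ Set.Icc a b, |iteratedDerivWithin (m + 1) f (Set.Icc a b) x| ≤ K) →
      ∀ x ∈ Set.Icc a b,
        |f x - iteratedDerivWithin m f (Set.Icc a b) b * (x - b) ^ m / m.factorial|
          ≤ K * (b - x) ^ (m + 1) := by
  have U : UniqueDiffOn ℝ (Set.Icc a b) := uniqueDiffOn_Icc hab
  have hbmem : b ∈ Set.Icc a b := Set.right_mem_Icc.2 hab.le
  intro m
  induction m with
  | zero =>
    intro f K hf hvan hK hbd x hx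
    have hdiff : DifferentiableOn ℝ f (Set.Icc a b) :=
      hf.differentiableOn (by norm_num)
    have key := laplace_aux_abs_bound (F := fun z => f z - f b)
      (F' := fun y => iteratedDerivWithin 1 f (Set.Icc a b) y) 0
      (fun y hy => by
        have h0 := (hdiff y hy).hasDerivWithinAt
        simp only [iteratedDerivWithin_one]
        exact h0.sub_const _)
      (by simp) hK (fun y hy => by simpa using hbd y hy) x hx
    simpa [iteratedDerivWithin_zero] using key
  | succ m ih =>
    intro f K hf hvan hK hbd x hx
    set s := Set.Icc a b with hs
    set f' := derivWithin f s with hf'def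
    have hf' : ContDiffOn ℝ (m + 1 : ℕ) f' s := by
      apply hf.derivWithin U
      norm_cast
    have hvan' : ∀ i < m, iteratedDerivWithin i f' s b = 0 := by
      intro i hi
      rw [← iteratedDerivWithin_succ']
      exact hvan (i + 1) (Nat.succ_lt_succ hi)
    have hbd' : ∀ y ∈ s, |iteratedDerivWithin (m + 1) f' s y| ≤ K := by
      intro y hy
      rw [← iteratedDerivWithin_succ']
      exact hbd y hy
    have IH := ih f' K hf' hvan' hK hbd'
    set c := iteratedDerivWithin (m + 1) f s b with hc
    have hcb : iteratedDerivWithin m f' s b = c := by rw [hc, iteratedDerivWithin_succ']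
    have hdiff : DifferentiableOn ℝ f s := hf.differentiableOn (by norm_cast)
    have hfb : f b = 0 := by
      have := hvan 0 (Nat.succ_pos m)
      simpa [iteratedDerivWithin_zero] using this
    have key := laplace_aux_abs_bound
      (F := fun z => f z - c * (z - b) ^ (m + 1) / (m + 1).factorial)
      (F' := fun y => f' y - c * (y - b) ^ m / m.factorial) (m + 1)
      (fun y hy => by
        have h1 : HasDerivWithinAt f (f' y) s y := (hdiff y hy).hasDerivWithinAt
        have h2 : HasDerivAt (fun z : ℝ => c * (z - b) ^ (m + 1) / (m + 1).factorial)
            (c * (y - b) ^ m / m.factorial) y := by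
          have hp : HasDerivAt (fun z : ℝ => (z - b) ^ (m + 1))
              (((m : ℝ) + 1) * (y - b) ^ m * 1) y := by
            have := ((hasDerivAt_id y).sub_const b).fun_pow (m + 1)
            simpa using this
          have := (hp.const_mul c).div_const ((m + 1).factorial : ℝ)
          refine this.congr_deriv ?_
          have hfact : ((m + 1).factorial : ℝ) = ((m : ℝ) + 1) * m.factorial := by
            rw [Nat.factorial_succ]; push_cast; ring
          rw [hfact]
          have h1 : (m.factorial : ℝ) ≠ 0 := by positivity
          have h2 : ((m : ℝ) + 1) ≠ 0 := by positivity
          field_simp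
        exact h1.sub h2.hasDerivWithinAt)
      (by simp [hfb])
      hK
      (fun y hy => by
        have := IH y hy
        rw [hcb] at this
        exact this)
      x hx
    exact key

lemma laplace_J_integrable {β : ℝ} (hβ : 0 < β) (m : ℕ) :
    MeasureTheory.IntegrableOn (fun s : ℝ => s ^ m * Real.exp (-(β * s))) (Set.Ioi 0) := by
  have h := integrableOn_rpow_mul_exp_neg_mul_rpow (p := 1) (s := (m : ℝ)) (b := β)
    (by have := Nat.cast_nonneg (α := ℝ) m; linarith) zero_lt_one hβ
  apply h.congr_fun ?_ measurableSet_Ioi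
  intro x hx
  simp [Real.rpow_natCast, Real.rpow_one, neg_mul]

lemma laplace_J_value {β : ℝ} (hβ : 0 < β) (m : ℕ) :
    ∫ s in Set.Ioi (0 : ℝ), s ^ m * Real.exp (-(β * s)) = m.factorial / β ^ (m + 1) := by
  have h := Real.integral_rpow_mul_exp_neg_mul_Ioi (a := (m : ℝ) + 1) (r := β)
    (by positivity) hβ
  have h1 : ∀ t ∈ Set.Ioi (0 : ℝ), t ^ ((m : ℝ) + 1 - 1) * Real.exp (-(β * t))
      = t ^ m * Real.exp (-(β * t)) := by
    intro t ht
    rw [show (m : ℝ) + 1 - 1 = (m : ℝ) by ring, Real.rpow_natCast]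
  rw [setIntegral_congr_fun measurableSet_Ioi h1] at h
  rw [h]
  have h2 : ((m : ℝ) + 1) = ((m + 1 : ℕ) : ℝ) := by push_cast; ring
  rw [h2, Real.rpow_natCast]
  rw [show ((m + 1 : ℕ) : ℝ) = (m : ℝ) + 1 by push_cast; ring, Real.Gamma_nat_eq_factorial]
  rw [one_div, inv_pow]
  ring

lemma laplace_J_le {β R : ℝ} (hβ : 0 < β) (m : ℕ) :
    ∫ s in Set.Ioc (0 : ℝ) R, s ^ m * Real.exp (-(β * s)) ≤ m.factorial / β ^ (m + 1) := by
  rw [← laplace_J_value hβ m]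
  apply setIntegral_mono_set (laplace_J_integrable hβ m)
  · refine (ae_restrict_iff' measurableSet_Ioi).2 (Filter.Eventually.of_forall fun x hx => ?_)
    exact mul_nonneg (pow_nonneg (le_of_lt hx) m) (Real.exp_pos _).le
  · exact Set.Ioc_subset_Ioi_self.eventuallyLE

lemma laplace_J_tail {β R : ℝ} (hβ : 0 < β) (hR : 0 ≤ R) (m : ℕ) :
    ∫ s in Set.Ioi R, s ^ m * Real.exp (-(β * s)) ≤
      Real.exp (-(β / 2 * R)) * (m.factorial / (β / 2) ^ (m + 1)) := by
  have hβ2 : 0 < β / 2 := by linarith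
  have hint : MeasureTheory.IntegrableOn (fun s : ℝ => s ^ m * Real.exp (-(β / 2 * s)))
      (Set.Ioi 0) := laplace_J_integrable hβ2 m
  have hintR : MeasureTheory.IntegrableOn (fun s : ℝ => s ^ m * Real.exp (-(β * s)))
      (Set.Ioi R) := (laplace_J_integrable hβ m).mono_set (Set.Ioi_subset_Ioi hR)
  have hintR2 : MeasureTheory.IntegrableOn
      (fun s : ℝ => Real.exp (-(β / 2 * R)) * (s ^ m * Real.exp (-(β / 2 * s))))
      (Set.Ioi R) := (hint.mono_set (Set.Ioi_subset_Ioi hR)).const_mul _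
  have step1 : ∫ s in Set.Ioi R, s ^ m * Real.exp (-(β * s)) ≤
      ∫ s in Set.Ioi R, Real.exp (-(β / 2 * R)) * (s ^ m * Real.exp (-(β / 2 * s))) := by
    apply setIntegral_mono_on hintR hintR2 measurableSet_Ioi
    intro x hx
    have hx0 : (0 : ℝ) ≤ x := le_trans hR (le_of_lt hx)
    have key : Real.exp (-(β * x)) = Real.exp (-(β / 2 * x)) * Real.exp (-(β / 2 * x)) := by
      rw [← Real.exp_add]; ring_nf
    rw [key]
    have h1 : Real.exp (-(β / 2 * x)) ≤ Real.exp (-(β / 2 * R)) := by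
      apply Real.exp_le_exp.2
      have : R ≤ x := le_of_lt hx
      nlinarith
    have h2 : (0 : ℝ) ≤ x ^ m * Real.exp (-(β / 2 * x)) := by positivity
    calc x ^ m * (Real.exp (-(β / 2 * x)) * Real.exp (-(β / 2 * x)))
        = (x ^ m * Real.exp (-(β / 2 * x))) * Real.exp (-(β / 2 * x)) := by ring
      _ ≤ (x ^ m * Real.exp (-(β / 2 * x))) * Real.exp (-(β / 2 * R)) := by
          exact mul_le_mul_of_nonneg_left h1 h2
      _ = Real.exp (-(β / 2 * R)) * (x ^ m * Real.exp (-(β / 2 * x))) := by ring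
  have step2 : ∫ s in Set.Ioi R, Real.exp (-(β / 2 * R)) * (s ^ m * Real.exp (-(β / 2 * s)))
      = Real.exp (-(β / 2 * R)) * ∫ s in Set.Ioi R, s ^ m * Real.exp (-(β / 2 * s)) :=
    MeasureTheory.integral_const_mul _ _
  have step3 : ∫ s in Set.Ioi R, s ^ m * Real.exp (-(β / 2 * s)) ≤
      m.factorial / (β / 2) ^ (m + 1) := by
    rw [← laplace_J_value hβ2 m]
    apply setIntegral_mono_set hint
    · refine (ae_restrict_iff' measurableSet_Ioi).2 (Filter.Eventually.of_forall fun x hx => ?_)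
      exact mul_nonneg (pow_nonneg (le_of_lt hx) m) (Real.exp_pos _).le
    · exact (Set.Ioi_subset_Ioi hR).eventuallyLE
  calc ∫ s in Set.Ioi R, s ^ m * Real.exp (-(β * s))
      ≤ Real.exp (-(β / 2 * R)) * ∫ s in Set.Ioi R, s ^ m * Real.exp (-(β / 2 * s)) := by
        rw [← step2]; exact step1
    _ ≤ Real.exp (-(β / 2 * R)) * (m.factorial / (β / 2) ^ (m + 1)) := by
        exact mul_le_mul_of_nonneg_left step3 (Real.exp_pos _).le

lemma laplace_exp_diff {u v : ℝ} (hu : v ≤ u) :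
    |Real.exp u - Real.exp v| ≤ (u - v) * Real.exp u := by
  have key : Real.exp (v - u) * Real.exp u = Real.exp v := by
    rw [← Real.exp_add]; ring_nf
  have h1 := Real.add_one_le_exp (v - u)
  have h2 := Real.exp_pos u
  have h3 : Real.exp v ≤ Real.exp u := Real.exp_le_exp.2 hu
  rw [abs_of_nonneg (by linarith)]
  nlinarith

lemma laplace_lower_slope {a b : ℝ} (hab : a < b) {h : ℝ → ℝ}
    (hh : ContDiffOn ℝ 3 h (Set.Icc a b))
    (hmax : ∀ x ∈ Set.Icc a b, x ≠ b → h x < h b)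
    {α : ℝ} (hαdef : derivWithin h (Set.Icc a b) b = α) (hα0 : 0 < α) :
    ∃ lam, 0 < lam ∧ lam ≤ α ∧ ∀ x ∈ Set.Icc a b, h x - h b ≤ -(lam * (b - x)) := by
  have U : UniqueDiffOn ℝ (Set.Icc a b) := uniqueDiffOn_Icc hab
  have hbmem : b ∈ Set.Icc a b := Set.right_mem_Icc.2 hab.le
  set h' := derivWithin h (Set.Icc a b) with hh'def
  have hh'c : ContinuousOn h' (Set.Icc a b) :=
    (hh.derivWithin (m := 2) U (by norm_num)).continuousOn
  have hcw : ContinuousWithinAt h' (Set.Icc a b) b := hh'c b hbmem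
  rw [Metric.continuousWithinAt_iff] at hcw
  obtain ⟨δ, hδ0, hδ⟩ := hcw (α / 2) (by linarith)
  set δ0 := min (δ / 2) (b - a) with hδ0def
  have hδ00 : 0 < δ0 := lt_min (by linarith) (by linarith)
  have hδ0ba : δ0 ≤ b - a := min_le_right _ _
  set a' := b - δ0 with ha'def
  have haa' : a ≤ a' := by simp only [ha'def]; linarith
  have ha'b : a' < b := by simp only [ha'def]; linarith
  have hsub : Set.Icc a' b ⊆ Set.Icc a b := Set.Icc_subset_Icc haa' le_rfl
  have hdiffh : DifferentiableOn ℝ h (Set.Icc a b) := hh.differentiableOn (by norm_num)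
  -- h' ≥ α/2 on Icc a' b
  have hh'big : ∀ y ∈ Set.Icc a' b, α / 2 ≤ h' y := by
    intro y hy
    rcases eq_or_lt_of_le hy.2 with rfl | hyb
    · rw [hαdef]; linarith
    · have hdist : dist y b < δ := by
        rw [Real.dist_eq, abs_of_nonpos (by linarith [hy.2])]
        have : a' ≤ y := hy.1
        have : b - δ0 ≤ y := this
        have hd : δ0 ≤ δ / 2 := min_le_left _ _
        linarith
      have := hδ (hsub hy) hdist
      rw [Real.dist_eq, hαdef] at this
      have := abs_lt.1 this
      linarith [this.1]
  -- monotone part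
  have hmono : ∀ x ∈ Set.Icc a' b, h x - h b ≤ -(α / 2 * (b - x)) := by
    have hmon : MonotoneOn (fun y => h y - α / 2 * y) (Set.Icc a' b) := by
      apply monotoneOn_of_deriv_nonneg (convex_Icc a' b)
      · exact ((hh.continuousOn.mono hsub).sub (continuousOn_const.mul continuousOn_id))
      · intro y hy
        rw [interior_Icc] at hy
        have hymem : y ∈ Set.Ioo a b := ⟨lt_of_le_of_lt haa' hy.1, hy.2⟩
        have hda : HasDerivAt h (h' y) y :=
          ((hdiffh y (Set.Ioo_subset_Icc_self hymem)).hasDerivWithinAt).hasDerivAt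
            (Icc_mem_nhds hymem.1 hymem.2)
        exact ((hda.sub ((hasDerivAt_id y).const_mul (α / 2))).differentiableAt).differentiableWithinAt
      · intro y hy
        rw [interior_Icc] at hy
        have hymem : y ∈ Set.Ioo a b := ⟨lt_of_le_of_lt haa' hy.1, hy.2⟩
        have hda : HasDerivAt h (h' y) y :=
          ((hdiffh y (Set.Ioo_subset_Icc_self hymem)).hasDerivWithinAt).hasDerivAt
            (Icc_mem_nhds hymem.1 hymem.2)
        have hda2 : HasDerivAt (fun y => h y - α / 2 * y) (h' y - α / 2 * 1) y :=
          hda.sub ((hasDerivAt_id y).const_mul (α / 2))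
        rw [hda2.deriv]
        have := hh'big y (Set.Ioo_subset_Icc_self hy)
        linarith
    intro x hx
    have := hmon hx (Set.right_mem_Icc.2 (le_of_lt ha'b)) hx.2
    simp only at this
    nlinarith [this]
  -- compact sup part
  have hne : (Set.Icc a a').Nonempty := ⟨a, Set.left_mem_Icc.2 haa'⟩
  have hsub2 : Set.Icc a a' ⊆ Set.Icc a b := Set.Icc_subset_Icc le_rfl (le_of_lt ha'b)
  obtain ⟨x₀, hx₀mem, hx₀max⟩ := (isCompact_Icc).exists_isMaxOn hne
    (hh.continuousOn.mono hsub2)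
  have hx₀b : x₀ ≠ b := by
    intro hcon
    have := hx₀mem.2
    rw [hcon] at this
    linarith [lt_of_le_of_lt this ha'b]
  have hη0 : 0 < h b - h x₀ := by
    have := hmax x₀ (hsub2 hx₀mem) hx₀b
    linarith
  set η := h b - h x₀ with hηdef
  refine ⟨min (α / 2) (η / (b - a)), lt_min (by linarith) (div_pos hη0 (by linarith)), ?_, ?_⟩
  · exact le_trans (min_le_left _ _) (by linarith)
  · intro x hx
    have hbx0 : 0 ≤ b - x := by linarith [hx.2]
    rcases le_total x a' with hxa' | hxa'
    · have hhx : h x ≤ h x₀ := hx₀max ⟨hx.1, hxa'⟩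
      have h1 : min (α / 2) (η / (b - a)) * (b - x) ≤ (η / (b - a)) * (b - x) :=
        mul_le_mul_of_nonneg_right (min_le_right _ _) hbx0
      have h2 : (η / (b - a)) * (b - x) ≤ (η / (b - a)) * (b - a) := by
        apply mul_le_mul_of_nonneg_left _ (le_of_lt (div_pos hη0 (by linarith)))
        linarith [hx.1]
      have h3 : (η / (b - a)) * (b - a) = η := div_mul_cancel₀ η (by linarith)
      nlinarith
    · have := hmono x ⟨hxa', hx.2⟩
      have h1 : min (α / 2) (η / (b - a)) * (b - x) ≤ (α / 2) * (b - x) :=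
        mul_le_mul_of_nonneg_right (min_le_left _ _) hbx0
      linarith
lemma laplace_div_helper1 {K F L X : ℝ} (hX : X ≠ 0) (hL : L ≠ 0) :
    K * (F / (X * L)) = K * F / L * X⁻¹ := by
  rw [div_eq_mul_inv, div_eq_mul_inv, mul_inv]
  ring

lemma laplace_div_helper2 {t K2 c F L X : ℝ} (ht : t ≠ 0) (hX : X ≠ 0) (hL : L ≠ 0) :
    t * K2 * c * (F / ((X * t) * L)) = K2 * c * F / L * X⁻¹ := by
  rw [div_eq_mul_inv, div_eq_mul_inv, mul_inv, mul_inv]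
  rw [show t * K2 * c * (F * (X⁻¹ * t⁻¹ * L⁻¹)) = (t * t⁻¹) * (K2 * c * F * L⁻¹ * X⁻¹) from by
    ring, mul_inv_cancel₀ ht, one_mul]

lemma laplace_exp_diff' {u v w : ℝ} (h1 : u ≤ w) (h2 : v ≤ w) :
    |Real.exp u - Real.exp v| ≤ |u - v| * Real.exp w := by
  rcases le_total v u with hvu | huv
  · calc |Real.exp u - Real.exp v| ≤ (u - v) * Real.exp u := laplace_exp_diff hvu
      _ ≤ |u - v| * Real.exp w := by
        apply mul_le_mul (le_abs_self _) (Real.exp_le_exp.2 h1) (Real.exp_pos _).le (abs_nonneg _)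
  · rw [abs_sub_comm]
    calc |Real.exp v - Real.exp u| ≤ (v - u) * Real.exp v := laplace_exp_diff huv
      _ ≤ |u - v| * Real.exp w := by
        apply mul_le_mul _ (Real.exp_le_exp.2 h2) (Real.exp_pos _).le (abs_nonneg _)
        rw [abs_sub_comm]; exact le_abs_self _

lemma laplace_exp_small (ε : ℝ) (hε : 0 < ε) (n : ℕ) :
    ∃ T ≥ 1, ∀ t ≥ T, t ^ n * Real.exp (-(ε * t)) ≤ 1 := by
  have h1 : Filter.Tendsto (fun t : ℝ => (ε * t) ^ n * Real.exp (-(ε * t)))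
      Filter.atTop (nhds 0) :=
    (tendsto_pow_mul_exp_neg_atTop_nhds_zero n).comp (Filter.tendsto_id.const_mul_atTop hε)
  have h2 : Filter.Tendsto (fun t : ℝ => t ^ n * Real.exp (-(ε * t))) Filter.atTop (nhds 0) := by
    have := h1.const_mul ((ε ^ n)⁻¹)
    rw [mul_zero] at this
    apply this.congr'
    filter_upwards [Filter.eventually_gt_atTop 0] with t ht
    rw [mul_pow]
    field_simp
  have h3 : ∀ᶠ t in Filter.atTop, t ^ n * Real.exp (-(ε * t)) < 1 :=
    h2.eventually_lt_const one_pos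
  obtain ⟨T, hT⟩ := (Filter.eventually_atTop).1 h3
  exact ⟨max T 1, le_max_right _ _, fun t ht => (hT t (le_trans (le_max_left _ _) ht)).le⟩

set_option maxHeartbeats 1600000 in
/-- Laplace's method, maximum at the right endpoint `b` with `h'(b) ≠ 0`:
`∫ e^{th} g = e^{th(b)} (t^(-1-k) g^(k)(b) (h'(b))^(-1-k) (-1)^k + O(t^(-2-k)))`. -/
theorem laplace_right_endpoint_noncritical
    (a b : ℝ) (hab : a < b)
    (h g : ℝ → ℝ) (k : ℕ)
    (hh : ContDiffOn ℝ 3 h (Set.Icc a b))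
    (hmax : ∀ x ∈ Set.Icc a b, x ≠ b → h x < h b)
    (hh1 : derivWithin h (Set.Icc a b) b ≠ 0)
    (hh2 : iteratedDerivWithin 2 h (Set.Icc a b) b ≠ 0)
    (hg : ContDiffOn ℝ (k + 1) g (Set.Icc a b))
    (hgvanish : ∀ i < k, iteratedDerivWithin i g (Set.Icc a b) b = 0)
    (hgk : iteratedDerivWithin k g (Set.Icc a b) b ≠ 0) :
    ∃ C > 0, ∃ T > 0, ∀ t > T,
      |(∫ x in a..b, Real.exp (t * h x) * g x) -
        Real.exp (t * h b) * t ^ (-(1 : ℝ) - (k : ℝ)) *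
          iteratedDerivWithin k g (Set.Icc a b) b *
          (derivWithin h (Set.Icc a b) b) ^ (-1 - (k : ℤ)) * (-1 : ℝ) ^ k| ≤
        C * Real.exp (t * h b) * t ^ (-(2 : ℝ) - (k : ℝ)) := by
  have U : UniqueDiffOn ℝ (Set.Icc a b) := uniqueDiffOn_Icc hab
  have hbmem : b ∈ Set.Icc a b := Set.right_mem_Icc.2 hab.le
  set α := derivWithin h (Set.Icc a b) b with hαdef
  set gk := iteratedDerivWithin k g (Set.Icc a b) b with hgkdef
  have hdiffh : DifferentiableOn ℝ h (Set.Icc a b) := hh.differentiableOn (by norm_num)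
  -- positivity of α
  have hα0 : 0 < α := by
    have hge : 0 ≤ α := by
      have hder : HasDerivWithinAt h α (Set.Icc a b) b :=
        (hdiffh b hbmem).hasDerivWithinAt
      rw [hasDerivWithinAt_iff_tendsto_slope] at hder
      have hne : (nhdsWithin b (Set.Icc a b \ {b})).NeBot := by
        have heq : Set.Icc a b \ {b} = Set.Ico a b := Set.Icc_sdiff_right
        rw [heq]
        apply mem_closure_iff_nhdsWithin_neBot.1
        rw [closure_Ico hab.ne]
        exact Set.right_mem_Icc.2 hab.le
      apply ge_of_tendsto hder
      filter_upwards [self_mem_nhdsWithin] with y hy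
      have hyb : y < b := lt_of_le_of_ne hy.1.2 (by simpa using hy.2)
      have hlt : h y < h b := hmax y hy.1 (by simpa using hy.2)
      rw [slope_def_field]
      have h1 : h y - h b < 0 := by linarith
      have h2 : y - b < 0 := by linarith
      exact le_of_lt (div_pos_of_neg_of_neg h1 h2)
    exact lt_of_le_of_ne hge (Ne.symm hh1)
  -- lower slope bound
  obtain ⟨lam, hlam0, hlamα, hlam⟩ := laplace_lower_slope hab hh hmax hαdef.symm hα0
  -- Taylor bound for g
  have hgkcont : ContinuousOn (iteratedDerivWithin (k + 1) g (Set.Icc a b)) (Set.Icc a b) :=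
    hg.continuousOn_iteratedDerivWithin (by exact_mod_cast le_refl (k + 1 : ℕ)) U
  obtain ⟨K1', hK1'⟩ := isCompact_Icc.exists_bound_of_continuousOn hgkcont
  set K1 := max K1' 0 with hK1def
  have hK10 : 0 ≤ K1 := le_max_right _ _
  have hK1 : ∀ x ∈ Set.Icc a b,
      |g x - gk * (x - b) ^ k / k.factorial| ≤ K1 * (b - x) ^ (k + 1) := by
    apply laplace_taylor_bound hab k g K1 (by exact_mod_cast hg) hgvanish hK10
    intro x hx
    calc |iteratedDerivWithin (k + 1) g (Set.Icc a b) x| ≤ K1' := by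
          have := hK1' x hx; rwa [Real.norm_eq_abs] at this
      _ ≤ K1 := le_max_left _ _
  -- Taylor bounds for h
  have hh2cont : ContinuousOn (iteratedDerivWithin 2 h (Set.Icc a b)) (Set.Icc a b) :=
    hh.continuousOn_iteratedDerivWithin (by norm_num) U
  obtain ⟨K2', hK2'⟩ := isCompact_Icc.exists_bound_of_continuousOn hh2cont
  set K2 := max K2' 0 with hK2def
  have hK20 : 0 ≤ K2 := le_max_right _ _
  have hK2a : ∀ x ∈ Set.Icc a b,
      |derivWithin h (Set.Icc a b) x - α| ≤ K2 * (b - x) ^ (0 + 1) := by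
    apply laplace_aux_abs_bound (F' := fun y => iteratedDerivWithin 2 h (Set.Icc a b) y) 0
    · intro y hy
      have hd : DifferentiableWithinAt ℝ (derivWithin h (Set.Icc a b)) (Set.Icc a b) y :=
        (hh.derivWithin (m := 2) U (by norm_num)).differentiableOn (by norm_num) y hy
      have h2 : iteratedDerivWithin 2 h (Set.Icc a b) y
          = derivWithin (derivWithin h (Set.Icc a b)) (Set.Icc a b) y := by
        rw [iteratedDerivWithin_succ', iteratedDerivWithin_one]
      rw [h2]
      exact hd.hasDerivWithinAt.sub_const α
    · simp [hαdef]
    · exact hK20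
    · intro y hy
      calc |iteratedDerivWithin 2 h (Set.Icc a b) y| ≤ K2' := by
            have := hK2' y hy; rwa [Real.norm_eq_abs] at this
        _ ≤ K2 := le_max_left _ _
        _ = K2 * (b - y) ^ 0 := by ring
  have hK2 : ∀ x ∈ Set.Icc a b,
      |h x - h b - α * (x - b)| ≤ K2 * (b - x) ^ 2 := by
    have key := laplace_aux_abs_bound (F := fun y => h y - h b - α * (y - b))
      (F' := fun y => derivWithin h (Set.Icc a b) y - α) 1
      (fun y hy => by
        have h1 : HasDerivWithinAt h (derivWithin h (Set.Icc a b) y) (Set.Icc a b) y :=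
          (hdiffh y hy).hasDerivWithinAt
        have h2 : HasDerivAt (fun y => h b + α * (y - b)) α y := by
          simpa using (((hasDerivAt_id y).sub_const b).const_mul α).const_add (h b)
        have h3 := h1.fun_sub h2.hasDerivWithinAt
        simpa [sub_sub] using h3)
      (by simp) hK20 hK2a
    intro x hx
    exact key x hx
  -- constants
  set c := gk / (k.factorial : ℝ) with hcdef
  set R := b - a with hRdef
  have hR0 : 0 < R := by simp only [hRdef]; linarith
  set C1 := K1 * ((k + 1).factorial : ℝ) / lam ^ (k + 2) with hC1def
  set C2 := K2 * |c| * ((k + 2).factorial : ℝ) / lam ^ (k + 3) with hC2def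
  set C3 := |c| * (k.factorial : ℝ) / (α / 2) ^ (k + 1) with hC3def
  have hC10 : 0 ≤ C1 := by
    apply div_nonneg (mul_nonneg hK10 (Nat.cast_nonneg _)) (by positivity)
  have hC20 : 0 ≤ C2 := by
    apply div_nonneg (mul_nonneg (mul_nonneg hK20 (abs_nonneg _)) (Nat.cast_nonneg _))
      (by positivity)
  have hC30 : 0 ≤ C3 := by
    apply div_nonneg (mul_nonneg (abs_nonneg _) (Nat.cast_nonneg _)) (by positivity)
  set C := C1 + C2 + C3 + 1 with hCdef
  have hC0 : 0 < C := by simp only [hCdef]; linarith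
  -- choose T
  obtain ⟨T, hT1, hT⟩ := laplace_exp_small (α * R / 2) (by positivity) (k + 2)
  refine ⟨C, hC0, T, by linarith, ?_⟩
  intro t ht
  have ht1 : 1 ≤ t := le_trans hT1 ht.le
  have ht0 : 0 < t := by linarith
  have htlam : 0 < t * lam := by positivity
  have htα : 0 < t * α := by positivity
  -- step 1 : factor out exp(t h b)
  have hsplit : (∫ x in a..b, Real.exp (t * h x) * g x)
      = Real.exp (t * h b) * ∫ x in a..b, Real.exp (t * (h x - h b)) * g x := by
    rw [← intervalIntegral.integral_const_mul]
    apply intervalIntegral.integral_congr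
    intro x _
    show Real.exp (t * h x) * g x = Real.exp (t * h b) * (Real.exp (t * (h x - h b)) * g x)
    rw [← mul_assoc, ← Real.exp_add]
    congr 2
    ring
  -- step 2 : substitution x = b - s
  have hsub := intervalIntegral.integral_comp_sub_left (a := a) (b := b)
    (fun s => Real.exp (t * (h (b - s) - h b)) * g (b - s)) b
  simp only [sub_sub_cancel, sub_self] at hsub
  rw [← hRdef] at hsub
  -- model integrand
  set fmodel := fun s : ℝ => c * (-s) ^ k * Real.exp (-(t * α * s)) with hfmodeldef
  have hfmodel_eq : ∀ s ∈ Set.Ioi (0:ℝ),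
      (c * (-1 : ℝ) ^ k) * (s ^ k * Real.exp (-(t * α * s))) = fmodel s := by
    intro s _
    show _ = c * (-s) ^ k * Real.exp (-(t * α * s))
    rw [neg_pow]
    ring
  have hmodel_int : MeasureTheory.IntegrableOn fmodel (Set.Ioi 0) := by
    have hbase : MeasureTheory.IntegrableOn
        (fun s : ℝ => (c * (-1 : ℝ) ^ k) * (s ^ k * Real.exp (-(t * α * s)))) (Set.Ioi 0) :=
      (laplace_J_integrable htα k).const_mul _
    exact hbase.congr_fun hfmodel_eq measurableSet_Ioi
  have hmodel_val : ∫ s in Set.Ioi (0 : ℝ), fmodel s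
      = t ^ (-(1 : ℝ) - (k : ℝ)) * gk * α ^ (-1 - (k : ℤ)) * (-1 : ℝ) ^ k := by
    rw [← MeasureTheory.setIntegral_congr_fun measurableSet_Ioi hfmodel_eq]
    rw [MeasureTheory.integral_const_mul, laplace_J_value htα k]
    have hrp : t ^ (-(1 : ℝ) - (k : ℝ)) = (t ^ (k + 1 : ℕ))⁻¹ := by
      rw [show -(1 : ℝ) - (k : ℝ) = -((k + 1 : ℕ) : ℝ) by push_cast; ring,
        Real.rpow_neg ht0.le, Real.rpow_natCast]
    have hzp : α ^ (-1 - (k : ℤ)) = (α ^ (k + 1 : ℕ))⁻¹ := by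
      rw [show (-1 - (k : ℤ)) = -((k + 1 : ℕ) : ℤ) by push_cast; ring,
        zpow_neg, zpow_natCast]
    rw [hrp, hzp, hcdef, mul_pow]
    have h1 : ((k.factorial : ℝ)) ≠ 0 := by positivity
    have h2 : (t : ℝ) ^ (k + 1) ≠ 0 := by positivity
    have h3 : α ^ (k + 1) ≠ 0 := by positivity
    field_simp
    try ring
  -- split the model integral
  have hsplit2 : ∫ s in Set.Ioi (0 : ℝ), fmodel s
      = (∫ s in Set.Ioc (0 : ℝ) R, fmodel s) + ∫ s in Set.Ioi R, fmodel s := by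
    rw [← MeasureTheory.setIntegral_union (Set.Ioc_disjoint_Ioi le_rfl) measurableSet_Ioi
      (hmodel_int.mono_set Set.Ioc_subset_Ioi_self)
      (hmodel_int.mono_set (Set.Ioi_subset_Ioi hR0.le)),
      Set.Ioc_union_Ioi_eq_Ioi hR0.le]
  have hIoc : (∫ s in Set.Ioc (0 : ℝ) R, fmodel s) = ∫ s in (0 : ℝ)..R, fmodel s :=
    (intervalIntegral.integral_of_le hR0.le).symm
  -- integrands
  set G := fun s : ℝ => Real.exp (t * (h (b - s) - h b)) * g (b - s) with hGdef
  set E1 := fun s : ℝ => Real.exp (t * (h (b - s) - h b)) * (g (b - s) - c * (-s) ^ k)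
    with hE1def
  set E2 := fun s : ℝ =>
    (Real.exp (t * (h (b - s) - h b)) - Real.exp (-(t * α * s))) * (c * (-s) ^ k) with hE2def
  have hGsub : ∀ s, G s - fmodel s = E1 s + E2 s := by
    intro s; simp only [hGdef, hE1def, hE2def, hfmodeldef]; ring
  -- continuity and integrability on [0, R]
  have hmaps : Set.MapsTo (fun s : ℝ => b - s) (Set.uIcc (0 : ℝ) R) (Set.Icc a b) := by
    rw [Set.uIcc_of_le hR0.le]
    intro s hs
    rw [Set.mem_Icc] at hs
    have h1 : (0:ℝ) ≤ s := hs.1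
    have h2 : s ≤ b - a := by rw [← hRdef]; exact hs.2
    show b - s ∈ Set.Icc a b
    rw [Set.mem_Icc]
    constructor <;> linarith
  have hcont_bs : ContinuousOn (fun s : ℝ => b - s) (Set.uIcc (0 : ℝ) R) :=
    (continuous_const.sub continuous_id).continuousOn
  have hcont_hbs : ContinuousOn (fun s : ℝ => h (b - s)) (Set.uIcc (0 : ℝ) R) :=
    hh.continuousOn.comp hcont_bs hmaps
  have hcont_gbs : ContinuousOn (fun s : ℝ => g (b - s)) (Set.uIcc (0 : ℝ) R) :=
    hg.continuousOn.comp hcont_bs hmaps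
  have hcont_exp1 : ContinuousOn (fun s : ℝ => Real.exp (t * (h (b - s) - h b)))
      (Set.uIcc (0 : ℝ) R) :=
    Real.continuous_exp.comp_continuousOn
      (continuousOn_const.mul (hcont_hbs.sub continuousOn_const))
  have hcont_exp2 : ContinuousOn (fun s : ℝ => Real.exp (-(t * α * s)))
      (Set.uIcc (0 : ℝ) R) :=
    Real.continuous_exp.comp_continuousOn (continuousOn_const.mul continuousOn_id).neg
  have hcont_pk : ContinuousOn (fun s : ℝ => c * (-s) ^ k) (Set.uIcc (0 : ℝ) R) :=
    (continuousOn_const.mul ((continuousOn_id.neg).pow k))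
  have hGint : IntervalIntegrable G MeasureTheory.volume 0 R :=
    (hcont_exp1.mul hcont_gbs).intervalIntegrable
  have hfmint : IntervalIntegrable fmodel MeasureTheory.volume 0 R :=
    ((continuousOn_const.mul ((continuousOn_id.neg).pow k)).mul hcont_exp2).intervalIntegrable
  have hE1int : IntervalIntegrable E1 MeasureTheory.volume 0 R :=
    (hcont_exp1.mul (hcont_gbs.sub hcont_pk)).intervalIntegrable
  have hE2int : IntervalIntegrable E2 MeasureTheory.volume 0 R :=
    ((hcont_exp1.sub hcont_exp2).mul hcont_pk).intervalIntegrable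
  have hD : (∫ s in (0 : ℝ)..R, G s) - (∫ s in (0 : ℝ)..R, fmodel s)
      = (∫ s in (0 : ℝ)..R, E1 s) + ∫ s in (0 : ℝ)..R, E2 s := by
    rw [← intervalIntegral.integral_sub hGint hfmint,
      ← intervalIntegral.integral_add hE1int hE2int]
    apply intervalIntegral.integral_congr
    intro s _
    exact hGsub s
  -- pointwise facts for s ∈ Ioc 0 R
  have hpoint : ∀ s ∈ Set.Ioc (0 : ℝ) R,
      (b - s ∈ Set.Icc a b) ∧ t * (h (b - s) - h b) ≤ -(t * lam * s)
        ∧ -(t * α * s) ≤ -(t * lam * s) := by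
    intro s hs
    have hx : b - s ∈ Set.Icc a b := by
      rw [Set.mem_Icc]
      simp only [hRdef] at hs
      constructor <;> linarith [hs.1, hs.2]
    refine ⟨hx, ?_, ?_⟩
    · have hl := hlam (b - s) hx
      have hbs : b - (b - s) = s := by ring
      rw [hbs] at hl
      calc t * (h (b - s) - h b) ≤ t * (-(lam * s)) :=
            mul_le_mul_of_nonneg_left hl ht0.le
        _ = -(t * lam * s) := by ring
    · have hls : lam * s ≤ α * s := mul_le_mul_of_nonneg_right hlamα hs.1.le
      nlinarith
  -- bound for E1
  have hE1bound : |∫ s in (0 : ℝ)..R, E1 s|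
      ≤ K1 * (((k + 1).factorial : ℝ) / (t * lam) ^ (k + 2)) := by
    have hgb : IntervalIntegrable (fun s : ℝ => K1 * (s ^ (k + 1) * Real.exp (-(t * lam * s))))
        MeasureTheory.volume 0 R := by
      apply ContinuousOn.intervalIntegrable
      apply continuousOn_const.mul
      apply ((continuousOn_id.pow (k + 1)).mul)
      exact Real.continuous_exp.comp_continuousOn
        (continuousOn_const.mul continuousOn_id).neg
    have hae : ∀ᵐ s ∂(MeasureTheory.volume.restrict (Set.uIoc (0 : ℝ) R)),
        ‖E1 s‖ ≤ K1 * (s ^ (k + 1) * Real.exp (-(t * lam * s))) := by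
      refine (MeasureTheory.ae_restrict_iff' measurableSet_uIoc).2
        (Filter.Eventually.of_forall fun s hs => ?_)
      rw [Set.uIoc_of_le hR0.le] at hs
      obtain ⟨hx, hexp, _⟩ := hpoint s hs
      have hs0 : 0 ≤ s := hs.1.le
      have hgx : |g (b - s) - c * (-s) ^ k| ≤ K1 * s ^ (k + 1) := by
        have hkk := hK1 (b - s) hx
        have hbs : b - (b - s) = s := by ring
        rw [hbs] at hkk
        have hc : c * (-s) ^ k = gk * ((b - s) - b) ^ k / k.factorial := by
          rw [hcdef, show -s = (b - s) - b by ring]; ring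
        rw [hc]
        exact hkk
      rw [Real.norm_eq_abs, hE1def]
      calc |Real.exp (t * (h (b - s) - h b)) * (g (b - s) - c * (-s) ^ k)|
          = Real.exp (t * (h (b - s) - h b)) * |g (b - s) - c * (-s) ^ k| := by
            rw [abs_mul, abs_of_pos (Real.exp_pos _)]
        _ ≤ Real.exp (-(t * lam * s)) * (K1 * s ^ (k + 1)) :=
            mul_le_mul (Real.exp_le_exp.2 hexp) hgx (abs_nonneg _) (Real.exp_pos _).le
        _ = K1 * (s ^ (k + 1) * Real.exp (-(t * lam * s))) := by ring
    have hnorm := intervalIntegral.norm_integral_le_of_norm_le hR0.le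
      ((MeasureTheory.ae_restrict_iff' measurableSet_Ioc).1 (by rw [Set.uIoc_of_le hR0.le] at hae; exact hae)) hgb
    rw [Real.norm_eq_abs] at hnorm
    apply hnorm.trans
    have hnn : 0 ≤ ∫ s in (0 : ℝ)..R, K1 * (s ^ (k + 1) * Real.exp (-(t * lam * s))) := by
      apply intervalIntegral.integral_nonneg hR0.le
      intro s hs
      have hss : (0:ℝ) ≤ s := hs.1
      positivity
    rw [intervalIntegral.integral_const_mul]
    apply mul_le_mul_of_nonneg_left _ hK10
    rw [intervalIntegral.integral_of_le hR0.le]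
    have hle := laplace_J_le (R := R) htlam (k + 1)
    simpa using hle
  -- bound for E2
  have hE2bound : |∫ s in (0 : ℝ)..R, E2 s|
      ≤ (t * K2 * |c|) * (((k + 2).factorial : ℝ) / (t * lam) ^ (k + 3)) := by
    have hgb : IntervalIntegrable
        (fun s : ℝ => (t * K2 * |c|) * (s ^ (k + 2) * Real.exp (-(t * lam * s))))
        MeasureTheory.volume 0 R := by
      apply ContinuousOn.intervalIntegrable
      apply continuousOn_const.mul
      apply ((continuousOn_id.pow (k + 2)).mul)
      exact Real.continuous_exp.comp_continuousOn
        (continuousOn_const.mul continuousOn_id).neg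
    have hae : ∀ᵐ s ∂(MeasureTheory.volume.restrict (Set.uIoc (0 : ℝ) R)),
        ‖E2 s‖ ≤ (t * K2 * |c|) * (s ^ (k + 2) * Real.exp (-(t * lam * s))) := by
      refine (MeasureTheory.ae_restrict_iff' measurableSet_uIoc).2
        (Filter.Eventually.of_forall fun s hs => ?_)
      rw [Set.uIoc_of_le hR0.le] at hs
      obtain ⟨hx, hexp1, hexp2⟩ := hpoint s hs
      have hs0 : 0 ≤ s := hs.1.le
      have hediff : |Real.exp (t * (h (b - s) - h b)) - Real.exp (-(t * α * s))|
          ≤ |t * (h (b - s) - h b) - (-(t * α * s))| * Real.exp (-(t * lam * s)) :=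
        laplace_exp_diff' hexp1 hexp2
      have harg : |t * (h (b - s) - h b) - (-(t * α * s))| ≤ t * (K2 * s ^ 2) := by
        have hh2b := hK2 (b - s) hx
        have hbs : b - (b - s) = s := by ring
        rw [hbs] at hh2b
        have heq : t * (h (b - s) - h b) - (-(t * α * s))
            = t * (h (b - s) - h b - α * ((b - s) - b)) := by ring
        rw [heq, abs_mul, abs_of_pos ht0]
        exact mul_le_mul_of_nonneg_left hh2b ht0.le
      have hck : |c * (-s) ^ k| = |c| * s ^ k := by
        rw [abs_mul, abs_pow, abs_neg, abs_of_nonneg hs0]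
      rw [Real.norm_eq_abs, hE2def]
      calc |(Real.exp (t * (h (b - s) - h b)) - Real.exp (-(t * α * s))) * (c * (-s) ^ k)|
          = |Real.exp (t * (h (b - s) - h b)) - Real.exp (-(t * α * s))| * (|c| * s ^ k) := by
            rw [abs_mul, hck]
        _ ≤ (t * (K2 * s ^ 2) * Real.exp (-(t * lam * s))) * (|c| * s ^ k) := by
            apply mul_le_mul_of_nonneg_right _ (by positivity)
            exact hediff.trans (mul_le_mul_of_nonneg_right harg (Real.exp_pos _).le)
        _ = (t * K2 * |c|) * (s ^ (k + 2) * Real.exp (-(t * lam * s))) := by ring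
    have hnorm := intervalIntegral.norm_integral_le_of_norm_le hR0.le
      ((MeasureTheory.ae_restrict_iff' measurableSet_Ioc).1 (by rw [Set.uIoc_of_le hR0.le] at hae; exact hae)) hgb
    rw [Real.norm_eq_abs] at hnorm
    apply hnorm.trans
    have hCnn : 0 ≤ t * K2 * |c| := by positivity
    have hnn : 0 ≤ ∫ s in (0 : ℝ)..R,
        (t * K2 * |c|) * (s ^ (k + 2) * Real.exp (-(t * lam * s))) := by
      apply intervalIntegral.integral_nonneg hR0.le
      intro s hs
      have hss : (0:ℝ) ≤ s := hs.1
      positivity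
    rw [intervalIntegral.integral_const_mul]
    apply mul_le_mul_of_nonneg_left _ hCnn
    rw [intervalIntegral.integral_of_le hR0.le]
    have hle := laplace_J_le (R := R) htlam (k + 2)
    simpa using hle
  -- tail bound
  have htail : |∫ s in Set.Ioi R, fmodel s|
      ≤ |c| * (Real.exp (-(t * α / 2 * R)) * ((k.factorial : ℝ) / (t * α / 2) ^ (k + 1))) := by
    have h1 : |∫ s in Set.Ioi R, fmodel s| ≤ ∫ s in Set.Ioi R, ‖fmodel s‖ := by
      rw [← Real.norm_eq_abs]
      exact MeasureTheory.norm_integral_le_integral_norm _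
    apply h1.trans
    have h2 : ∀ s ∈ Set.Ioi R, ‖fmodel s‖ = |c| * (s ^ k * Real.exp (-(t * α * s))) := by
      intro s hs
      have hs0 : (0:ℝ) ≤ s := le_trans hR0.le (le_of_lt hs)
      rw [Real.norm_eq_abs, hfmodeldef]
      rw [abs_mul, abs_mul, abs_pow, abs_neg, abs_of_nonneg hs0,
        abs_of_pos (Real.exp_pos _)]
      ring
    rw [MeasureTheory.setIntegral_congr_fun measurableSet_Ioi h2,
      MeasureTheory.integral_const_mul]
    apply mul_le_mul_of_nonneg_left _ (abs_nonneg c)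
    have hle := laplace_J_tail htα hR0.le k
    convert hle using 4 <;> ring
  -- convert bounds to powers of t
  have hT2 : Real.exp (-(t * α / 2 * R)) ≤ (t ^ (k + 2))⁻¹ := by
    have h1 := hT t ht.le
    have h2 : -(t * α / 2 * R) = -(α * R / 2 * t) := by ring
    rw [h2]
    have h3 : (0:ℝ) < t ^ (k + 2) := by positivity
    rw [← mul_le_mul_iff_right₀ h3, mul_inv_cancel₀ (ne_of_gt h3)]
    exact h1
  have htail2 : |∫ s in Set.Ioi R, fmodel s| ≤ C3 * (t ^ (k + 2))⁻¹ := by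
    apply htail.trans
    have hαt2 : (0:ℝ) < t * α / 2 := div_pos htα two_pos
    have hα2 : (0:ℝ) < α / 2 := by linarith
    have hfle : (k.factorial : ℝ) / (t * α / 2) ^ (k + 1)
        ≤ (k.factorial : ℝ) / (α / 2) ^ (k + 1) := by
      apply div_le_div_of_nonneg_left (Nat.cast_nonneg _) (pow_pos hα2 _)
      apply pow_le_pow_left₀ hα2.le
      nlinarith
    calc |c| * (Real.exp (-(t * α / 2 * R)) * ((k.factorial : ℝ) / (t * α / 2) ^ (k + 1)))
        ≤ |c| * ((t ^ (k + 2))⁻¹ * ((k.factorial : ℝ) / (α / 2) ^ (k + 1))) := by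
          apply mul_le_mul_of_nonneg_left _ (abs_nonneg c)
          apply mul_le_mul hT2 hfle
            (div_nonneg (Nat.cast_nonneg _) (pow_pos hαt2 _).le) (by positivity)
      _ = C3 * (t ^ (k + 2))⁻¹ := by rw [hC3def]; ring
  have hE1bound2 : |∫ s in (0 : ℝ)..R, E1 s| ≤ C1 * (t ^ (k + 2))⁻¹ := by
    apply hE1bound.trans
    apply le_of_eq
    rw [hC1def, mul_pow,
      laplace_div_helper1 (X := (t:ℝ) ^ (k + 2)) (by positivity) (by positivity)]
  have hE2bound2 : |∫ s in (0 : ℝ)..R, E2 s| ≤ C2 * (t ^ (k + 2))⁻¹ := by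
    apply hE2bound.trans
    apply le_of_eq
    rw [hC2def, mul_pow, pow_succ,
      laplace_div_helper2 (X := (t:ℝ) ^ (k + 2)) ht0.ne' (by positivity) (by positivity)]
  -- main estimate
  have hmain : |(∫ s in (0 : ℝ)..R, G s) - ∫ s in Set.Ioi (0 : ℝ), fmodel s|
      ≤ (C1 + C2 + C3) * (t ^ (k + 2))⁻¹ := by
    rw [hsplit2, hIoc]
    have heq : (∫ s in (0 : ℝ)..R, G s)
        - ((∫ s in (0 : ℝ)..R, fmodel s) + ∫ s in Set.Ioi R, fmodel s)
        = ((∫ s in (0 : ℝ)..R, E1 s) + ∫ s in (0 : ℝ)..R, E2 s)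
          - ∫ s in Set.Ioi R, fmodel s := by
      rw [← hD]; ring
    rw [heq]
    have h1 := abs_add_le (∫ s in (0 : ℝ)..R, E1 s) (∫ s in (0 : ℝ)..R, E2 s)
    calc |((∫ s in (0 : ℝ)..R, E1 s) + ∫ s in (0 : ℝ)..R, E2 s)
          - ∫ s in Set.Ioi R, fmodel s|
        ≤ |∫ s in (0 : ℝ)..R, E1 s| + |∫ s in (0 : ℝ)..R, E2 s|
          + |∫ s in Set.Ioi R, fmodel s| := by
          have h3 := abs_add_le ((∫ s in (0 : ℝ)..R, E1 s) + ∫ s in (0 : ℝ)..R, E2 s)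
            (-(∫ s in Set.Ioi R, fmodel s))
          rw [abs_neg] at h3
          rw [sub_eq_add_neg]
          linarith
      _ ≤ C1 * (t ^ (k + 2))⁻¹ + C2 * (t ^ (k + 2))⁻¹ + C3 * (t ^ (k + 2))⁻¹ := by
          linarith [hE1bound2, hE2bound2, htail2]
      _ = (C1 + C2 + C3) * (t ^ (k + 2))⁻¹ := by ring
  -- final conversion
  have hgoal_eq : (∫ x in a..b, Real.exp (t * h x) * g x)
      - Real.exp (t * h b) * t ^ (-(1 : ℝ) - (k : ℝ)) * gk * α ^ (-1 - (k : ℤ)) * (-1 : ℝ) ^ k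
      = Real.exp (t * h b) * ((∫ s in (0 : ℝ)..R, G s) - ∫ s in Set.Ioi (0 : ℝ), fmodel s) := by
    rw [hsplit, hsub, hmodel_val]
    ring
  rw [hgoal_eq, abs_mul, abs_of_pos (Real.exp_pos _)]
  have hrp2 : t ^ (-(2 : ℝ) - (k : ℝ)) = (t ^ (k + 2 : ℕ))⁻¹ := by
    rw [show -(2 : ℝ) - (k : ℝ) = -((k + 2 : ℕ) : ℝ) by push_cast; ring,
      Real.rpow_neg ht0.le, Real.rpow_natCast]
  calc Real.exp (t * h b)
        * |(∫ s in (0 : ℝ)..R, G s) - ∫ s in Set.Ioi (0 : ℝ), fmodel s|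
      ≤ Real.exp (t * h b) * ((C1 + C2 + C3) * (t ^ (k + 2))⁻¹) :=
        mul_le_mul_of_nonneg_left hmain (Real.exp_pos _).le
    _ ≤ Real.exp (t * h b) * (C * (t ^ (k + 2))⁻¹) := by
        apply mul_le_mul_of_nonneg_left _ (Real.exp_pos _).le
        apply mul_le_mul_of_nonneg_right _ (by positivity)
        rw [hCdef]; linarith
    _ = C * Real.exp (t * h b) * t ^ (-(2 : ℝ) - (k : ℝ)) := by rw [hrp2]; ring
end
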